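/- arXiv:1604.06009 — 2 statements merged into one kernel-verified Lean document; each statement's English description precedes it below -/
import Mathlib

section
/- Let L be a finite lattice with a CN-labeling λ : Cov(L) → P and let Θ be a lattice congruence of L. Define an edge-labeling λ̃ of the quotient lattice L/Θ by λ̃([x]_Θ, [y]_Θ) = λ(x, y) whenever (x, y) ∈ Cov(L) and x ≢ y mod Θ. Then λ̃ is well-defined (its value on a covering pair of L/Θ does not depend on the chosen representing covering pair of L) and λ̃ is a CN-labeling of L/Θ. -/
universe u v

/-- A lattice congruence on a lattice `L`: an equivalence relation compatible with
meets and joins. -/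
structure LatticeCongruence (L : Type u) [Lattice L] : Type u where
  r : L → L → Prop
  refl : ∀ x, r x x
  symm : ∀ x y, r x y → r y x
  trans : ∀ x y z, r x y → r y z → r x z
  inf_congr : ∀ x y z, r x y → r (x ⊓ z) (y ⊓ z)
  sup_congr : ∀ x y z, r x y → r (x ⊔ z) (y ⊔ z)

namespace LatticeCongruence

variable {L : Type u} [Lattice L]

theorem ext' {c d : LatticeCongruence L} (h : ∀ x y, c.r x y ↔ d.r x y) : c = d := by
  have hr : c.r = d.r := funext fun x => funext fun y => propext (h x y)
  cases c; cases d
  subst hr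
  rfl

/-- Congruences are ordered by refinement. -/
instance : PartialOrder (LatticeCongruence L) where
  le c d := ∀ x y : L, c.r x y → d.r x y
  le_refl c := fun _ _ h => h
  le_trans a b c hab hbc := fun x y h => hbc x y (hab x y h)
  le_antisymm a b hab hba := ext' fun x y => ⟨hab x y, hba x y⟩

/-- The join of two congruences. -/
def conSup (c d : LatticeCongruence L) : LatticeCongruence L where
  r x y := ∀ e : LatticeCongruence L, c ≤ e → d ≤ e → e.r x y
  refl := fun x e _ _ => e.refl x
  symm := fun x y h e hc hd => e.symm x y (h e hc hd)
  trans := fun x y z h h' e hc hd => e.trans x y z (h e hc hd) (h' e hc hd)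
  inf_congr := fun x y z h e hc hd => e.inf_congr x y z (h e hc hd)
  sup_congr := fun x y z h e hc hd => e.sup_congr x y z (h e hc hd)

/-- The meet of two congruences (their intersection). -/
def conInf (c d : LatticeCongruence L) : LatticeCongruence L where
  r x y := c.r x y ∧ d.r x y
  refl := fun x => ⟨c.refl x, d.refl x⟩
  symm := fun x y h => ⟨c.symm x y h.1, d.symm x y h.2⟩
  trans := fun x y z h h' => ⟨c.trans x y z h.1 h'.1, d.trans x y z h.2 h'.2⟩
  inf_congr := fun x y z h => ⟨c.inf_congr x y z h.1, d.inf_congr x y z h.2⟩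
  sup_congr := fun x y z h => ⟨c.sup_congr x y z h.1, d.sup_congr x y z h.2⟩

/-- The lattice `Con(L)` of congruences of `L`. -/
instance : Lattice (LatticeCongruence L) where
  sup := conSup
  le_sup_left c d := fun x y h e hc _ => hc x y h
  le_sup_right c d := fun x y h e _ hd => hd x y h
  sup_le a b c hac hbc := fun x y h => h c hac hbc
  inf := conInf
  inf_le_left c d := fun _ _ h => h.1
  inf_le_right c d := fun _ _ h => h.2
  le_inf a b c hab hac := fun x y h => ⟨hab x y h, hac x y h⟩

/-- `conGen a b` is the finest lattice congruence identifying `a` and `b`. -/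
def conGen (a b : L) : LatticeCongruence L where
  r x y := ∀ e : LatticeCongruence L, e.r a b → e.r x y
  refl := fun x e _ => e.refl x
  symm := fun x y h e he => e.symm x y (h e he)
  trans := fun x y z h h' e he => e.trans x y z (h e he) (h' e he)
  inf_congr := fun x y z h e he => e.inf_congr x y z (h e he)
  sup_congr := fun x y z h e he => e.sup_congr x y z (h e he)

/-- The setoid underlying a lattice congruence. -/
def setoid (c : LatticeCongruence L) : Setoid L :=
  ⟨c.r, ⟨c.refl, fun h => c.symm _ _ h, fun h h' => c.trans _ _ _ h h'⟩⟩

/-- The quotient of `L` by a lattice congruence. -/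
def Quo (c : LatticeCongruence L) : Type u := Quotient c.setoid

/-- The canonical quotient map `L → L/Θ`. -/
def mkQ (c : LatticeCongruence L) (x : L) : c.Quo := Quotient.mk c.setoid x

variable (c : LatticeCongruence L)

theorem sup_congr₂ {x x' y y' : L} (hx : c.r x x') (hy : c.r y y') :
    c.r (x ⊔ y) (x' ⊔ y') := by
  have h1 : c.r (x ⊔ y) (x' ⊔ y) := c.sup_congr x x' y hx
  have h2 : c.r (y ⊔ x') (y' ⊔ x') := c.sup_congr y y' x' hy
  rw [sup_comm y x', sup_comm y' x'] at h2
  exact c.trans _ _ _ h1 h2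

theorem inf_congr₂ {x x' y y' : L} (hx : c.r x x') (hy : c.r y y') :
    c.r (x ⊓ y) (x' ⊓ y') := by
  have h1 : c.r (x ⊓ y) (x' ⊓ y) := c.inf_congr x x' y hx
  have h2 : c.r (y ⊓ x') (y' ⊓ x') := c.inf_congr y y' x' hy
  rw [inf_comm y x', inf_comm y' x'] at h2
  exact c.trans _ _ _ h1 h2

instance : Max c.Quo :=
  ⟨Quotient.lift₂ (fun x y => c.mkQ (x ⊔ y))
    (fun _ _ _ _ hx hy => Quotient.sound (c.sup_congr₂ hx hy))⟩

instance : Min c.Quo :=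
  ⟨Quotient.lift₂ (fun x y => c.mkQ (x ⊓ y))
    (fun _ _ _ _ hx hy => Quotient.sound (c.inf_congr₂ hx hy))⟩

theorem quo_sup_comm (a b : c.Quo) : a ⊔ b = b ⊔ a :=
  Quotient.inductionOn₂ a b fun x y => congrArg (Quotient.mk c.setoid) (sup_comm x y)

theorem quo_sup_assoc (a b d : c.Quo) : a ⊔ b ⊔ d = a ⊔ (b ⊔ d) :=
  Quotient.inductionOn₃ a b d fun x y z => congrArg (Quotient.mk c.setoid) (sup_assoc x y z)

theorem quo_inf_comm (a b : c.Quo) : a ⊓ b = b ⊓ a :=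
  Quotient.inductionOn₂ a b fun x y => congrArg (Quotient.mk c.setoid) (inf_comm x y)

theorem quo_inf_assoc (a b d : c.Quo) : a ⊓ b ⊓ d = a ⊓ (b ⊓ d) :=
  Quotient.inductionOn₃ a b d fun x y z => congrArg (Quotient.mk c.setoid) (inf_assoc x y z)

theorem quo_sup_inf_self (a b : c.Quo) : a ⊔ a ⊓ b = a :=
  Quotient.inductionOn₂ a b fun x y =>
    congrArg (Quotient.mk c.setoid) (sup_inf_self (a := x) (b := y))

theorem quo_inf_sup_self (a b : c.Quo) : a ⊓ (a ⊔ b) = a :=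
  Quotient.inductionOn₂ a b fun x y =>
    congrArg (Quotient.mk c.setoid) (inf_sup_self (a := x) (b := y))

/-- The quotient lattice `L/Θ`. -/
instance : Lattice c.Quo :=
  Lattice.mk' c.quo_sup_comm c.quo_sup_assoc c.quo_inf_comm c.quo_inf_assoc
    c.quo_sup_inf_self c.quo_inf_sup_self

end LatticeCongruence

open LatticeCongruence in
/-- A finite lattice is congruence-uniform if `j ↦ con(j₊, j)` is a bijection from
join-irreducibles of `L` onto join-irreducibles of `Con(L)`, and dually
`m ↦ con(m, m⁺)` is a bijection from meet-irreducibles of `L` onto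
meet-irreducibles of `Con(L)`. -/
def IsCongruenceUniform (L : Type u) [Lattice L] : Prop :=
  (∀ j : L, SupIrred j → ∀ a : L, a ⋖ j → SupIrred (conGen a j)) ∧
  (∀ j j' a a' : L, SupIrred j → SupIrred j' → a ⋖ j → a' ⋖ j' →
      conGen a j = conGen a' j' → j = j') ∧
  (∀ Θ : LatticeCongruence L, SupIrred Θ → ∃ j a : L, SupIrred j ∧ a ⋖ j ∧ conGen a j = Θ) ∧
  (∀ m : L, InfIrred m → ∀ b : L, m ⋖ b → InfIrred (conGen m b)) ∧
  (∀ m m' b b' : L, InfIrred m → InfIrred m' → m ⋖ b → m' ⋖ b' →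
      conGen m b = conGen m' b' → m = m') ∧
  (∀ Θ : LatticeCongruence L, InfIrred Θ → ∃ m b : L, InfIrred m ∧ m ⋖ b ∧ conGen m b = Θ)

/-- `C` is a maximal chain of the closed interval `[a, b]`. -/
def IsMaxChainIn {L : Type u} [Lattice L] (a b : L) (C : Set L) : Prop :=
  C ⊆ Set.Icc a b ∧ IsChain (· ≤ ·) C ∧
    ∀ D : Set L, D ⊆ Set.Icc a b → IsChain (· ≤ ·) D → C ⊆ D → C = D

/-- `u` and `v` are consecutive elements of the chain `C` (the covering pairs of `C`
viewed as a poset in its own right). -/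
def ConsecIn {L : Type u} [Lattice L] (C : Set L) (u v : L) : Prop :=
  u ∈ C ∧ v ∈ C ∧ u < v ∧ ∀ w ∈ C, ¬(u < w ∧ w < v)

/-- `lam` is a CN-labeling of the lattice `L` (with values in the poset `P`):
the defining conditions (CN1), (CN2), (CN3) hold in `L` and in its order-dual. -/
def IsCNLabeling {L : Type u} [Lattice L] {P : Type v} [PartialOrder P]
    (lam : L → L → P) : Prop :=
  (∀ x y z : L, x ≠ y → z ⋖ x → z ⋖ y →
    ∀ C₁ C₂ : Set L, IsMaxChainIn z (x ⊔ y) C₁ → IsMaxChainIn z (x ⊔ y) C₂ →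
      x ∈ C₁ → y ∈ C₂ →
      (∀ x' ∈ C₁, x' ⋖ (x ⊔ y) → lam x' (x ⊔ y) = lam z y) ∧
      (∀ y' ∈ C₂, y' ⋖ (x ⊔ y) → lam y' (x ⊔ y) = lam z x) ∧
      (∀ u v : L, ConsecIn C₁ u v → z < u → v < x ⊔ y →
        lam z x < lam u v ∧ lam z y < lam u v) ∧
      (∀ u v u' v' : L, ConsecIn C₁ u v → ConsecIn C₁ u' v' →
        lam u v = lam u' v' → u = u' ∧ v = v')) ∧
  (∀ x y z : L, x ≠ y → x ⋖ z → y ⋖ z →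
    ∀ C₁ C₂ : Set L, IsMaxChainIn (x ⊓ y) z C₁ → IsMaxChainIn (x ⊓ y) z C₂ →
      x ∈ C₁ → y ∈ C₂ →
      (∀ x' ∈ C₁, (x ⊓ y) ⋖ x' → lam (x ⊓ y) x' = lam y z) ∧
      (∀ y' ∈ C₂, (x ⊓ y) ⋖ y' → lam (x ⊓ y) y' = lam x z) ∧
      (∀ u v : L, ConsecIn C₁ u v → x ⊓ y < u → v < z →
        lam x z < lam u v ∧ lam y z < lam u v) ∧
      (∀ u v u' v' : L, ConsecIn C₁ u v → ConsecIn C₁ u' v' →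
        lam u v = lam u' v' → u = u' ∧ v = v'))

/-- `lam` is a CU-labeling of the lattice `L`: a CN-labeling satisfying (CU1), (CU2). -/
def IsCULabeling {L : Type u} [Lattice L] {P : Type v} [PartialOrder P]
    (lam : L → L → P) : Prop :=
  IsCNLabeling lam ∧
  (∀ j j' a a' : L, SupIrred j → SupIrred j' → a ⋖ j → a' ⋖ j' → j ≠ j' →
    lam a j ≠ lam a' j') ∧
  (∀ m m' b b' : L, InfIrred m → InfIrred m' → m ⋖ b → m' ⋖ b' → m ≠ m' →
    lam m b ≠ lam m' b')

/-- `λ↓(x)`: the set of labels of covering pairs below `x`. -/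
def lamDown {L : Type u} [Lattice L] {P : Type v} (lam : L → L → P) (x : L) : Set P :=
  {p | ∃ y, y ⋖ x ∧ lam y x = p}

/-- `λ↑(x)`: the set of labels of covering pairs above `x`. -/
def lamUp {L : Type u} [Lattice L] {P : Type v} (lam : L → L → P) (x : L) : Set P :=
  {p | ∃ y, x ⋖ y ∧ lam x y = p}

/-- Covering pairs `(x, y)` and `(w, z)` are associates. -/
def AreAssociates {L : Type u} [Lattice L] (x y w z : L) : Prop :=
  (y ⊓ w = x ∧ y ⊔ w = z) ∨ (x ⊓ z = w ∧ x ⊔ z = y)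

/-- `x = ⋁ A` is the canonical join-representation of `x`. -/
def IsCanonicalJoinRep {L : Type u} [Lattice L] (A : Set L) (x : L) : Prop :=
  (∀ a ∈ A, SupIrred a) ∧ IsLUB A x ∧ (∀ B ⊂ A, ¬IsLUB B x) ∧
    ∀ B : Set L, (∀ b ∈ B, SupIrred b) → IsLUB B x → (∀ B' ⊂ B, ¬IsLUB B' x) →
      ∀ a ∈ A, ∃ b ∈ B, a ≤ b

/-- `x = ⋀ A` is the canonical meet-representation of `x`. -/
def IsCanonicalMeetRep {L : Type u} [Lattice L] (A : Set L) (x : L) : Prop :=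
  (∀ a ∈ A, InfIrred a) ∧ IsGLB A x ∧ (∀ B ⊂ A, ¬IsGLB B x) ∧
    ∀ B : Set L, (∀ b ∈ B, InfIrred b) → IsGLB B x → (∀ B' ⊂ B, ¬IsGLB B' x) →
      ∀ a ∈ A, ∃ b ∈ B, b ≤ a

set_option linter.unusedSectionVars false
set_option linter.unusedVariables false
set_option maxHeartbeats 1000000

theorem Set.Finite.exists_maximal_wrt {α : Type*} {β : Type*} [PartialOrder β] (f : α → β)
    (s : Set α) (h : s.Finite) (hs : s.Nonempty) :
    ∃ a ∈ s, ∀ a' ∈ s, f a ≤ f a' → f a = f a' := by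
  obtain ⟨i, hi, hmax⟩ := h.exists_maximalFor f s hs
  exact ⟨i, hi, fun a' ha' hle => le_antisymm hle (hmax ha' hle)⟩

theorem Set.Finite.exists_minimal_wrt {α : Type*} {β : Type*} [PartialOrder β] (f : α → β)
    (s : Set α) (h : s.Finite) (hs : s.Nonempty) :
    ∃ a ∈ s, ∀ a' ∈ s, f a' ≤ f a → f a = f a' := by
  obtain ⟨i, hi, hmin⟩ := h.exists_minimalFor f s hs
  exact ⟨i, hi, fun a' ha' hle => le_antisymm (hmin ha' hle) hle⟩

namespace CNAux

variable {M : Type*} [Lattice M] [Finite M]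

theorem chain_exists_greatest {s : Set M} (hne : s.Nonempty) (hc : IsChain (· ≤ ·) s) :
    ∃ g ∈ s, ∀ e ∈ s, e ≤ g := by
  obtain ⟨g, hg, hmax⟩ := Set.Finite.exists_maximal_wrt id s (Set.toFinite s) hne
  refine ⟨g, hg, fun e he => ?_⟩
  rcases eq_or_ne e g with h | h
  · exact h.le
  rcases hc he hg h with h' | h'
  · exact h'
  · exact (hmax e he h').ge

theorem chain_exists_least {s : Set M} (hne : s.Nonempty) (hc : IsChain (· ≤ ·) s) :
    ∃ g ∈ s, ∀ e ∈ s, g ≤ e := by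
  obtain ⟨g, hg, hmin⟩ := Set.Finite.exists_minimal_wrt id s (Set.toFinite s) hne
  refine ⟨g, hg, fun e he => ?_⟩
  rcases eq_or_ne e g with h | h
  · exact h.ge
  rcases hc he hg h with h' | h'
  · exact (hmin e he h').le
  · exact h'

theorem exists_covby_le {a b : M} (h : a < b) : ∃ t, a ⋖ t ∧ t ≤ b := by
  obtain ⟨t, ht, hmin⟩ := Set.Finite.exists_minimal_wrt id {t | a < t ∧ t ≤ b}
    (Set.toFinite _) ⟨b, h, le_rfl⟩
  refine ⟨t, ⟨ht.1, fun w haw hwt => ?_⟩, ht.2⟩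
  exact hwt.ne (hmin w ⟨haw, hwt.le.trans ht.2⟩ hwt.le).symm

theorem exists_le_covby {a b : M} (h : a < b) : ∃ t, a ≤ t ∧ t ⋖ b := by
  obtain ⟨t, ht, hmax⟩ := Set.Finite.exists_maximal_wrt id {t | a ≤ t ∧ t < b}
    (Set.toFinite _) ⟨a, le_rfl, h⟩
  refine ⟨t, ht.1, ht.2, fun w htw hwb => ?_⟩
  exact htw.ne (hmax w ⟨ht.1.trans htw.le, hwb⟩ htw.le)

theorem maxChainIn_mem_ends {a b : M} {C : Set M} (hab : a ≤ b) (h : IsMaxChainIn a b C) :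
    a ∈ C ∧ b ∈ C := by
  have hch : IsChain (· ≤ ·) (insert a (insert b C)) := by
    refine IsChain.insert (IsChain.insert h.2.1 fun e he _ => Or.inr (h.1 he).2) ?_
    rintro e (rfl | he) _
    · exact Or.inl hab
    · exact Or.inl (h.1 he).1
  have hsub : insert a (insert b C) ⊆ Set.Icc a b := by
    refine Set.insert_subset ⟨le_rfl, hab⟩ (Set.insert_subset ⟨hab, le_rfl⟩ h.1)
  have := h.2.2 _ hsub hch (by intro x hx; exact Set.mem_insert_of_mem _ (Set.mem_insert_of_mem _ hx))
  constructor
  · rw [this]; exact Set.mem_insert _ _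
  · rw [this]; exact Set.mem_insert_of_mem _ (Set.mem_insert _ _)

theorem consecIn_covby {a b : M} {C : Set M} {u v : M} (h : IsMaxChainIn a b C)
    (huv : ConsecIn C u v) : u ⋖ v := by
  obtain ⟨hu, hv, hlt, hcon⟩ := huv
  refine ⟨hlt, fun t hut htv => ?_⟩
  have htC : t ∉ C := fun ht => hcon t ht ⟨hut, htv⟩
  have hch : IsChain (· ≤ ·) (insert t C) := by
    refine IsChain.insert h.2.1 fun e he hne => ?_
    rcases eq_or_ne e u with rfl | heu
    · exact Or.inr hut.le
    rcases h.2.1 he hu heu with h1 | h1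
    · exact Or.inr (h1.trans hut.le)
    · -- u ≤ e, e ≠ u so u < e
      rcases eq_or_ne e v with rfl | hev
      · exact Or.inl htv.le
      rcases h.2.1 he hv hev with h2 | h2
      · exact absurd ⟨lt_of_le_of_ne h1 (Ne.symm heu), lt_of_le_of_ne h2 hev⟩ (hcon e he)
      · exact Or.inl (htv.le.trans h2)
  have hsub : insert t C ⊆ Set.Icc a b :=
    Set.insert_subset ⟨(h.1 hu).1.trans hut.le, htv.le.trans (h.1 hv).2⟩ h.1
  have := h.2.2 _ hsub hch (Set.subset_insert _ _)
  exact htC (this ▸ Set.mem_insert _ _)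

theorem maxChainIn_of_saturated {a b : M} {C : Set M} (hsub : C ⊆ Set.Icc a b)
    (hch : IsChain (· ≤ ·) C) (ha : a ∈ C) (hb : b ∈ C)
    (hsat : ∀ u v, ConsecIn C u v → u ⋖ v) : IsMaxChainIn a b C := by
  refine ⟨hsub, hch, fun D hD hDch hCD => ?_⟩
  refine Set.Subset.antisymm hCD fun t ht => ?_
  by_contra htC
  have hcomp : ∀ e ∈ C, e ≤ t ∨ t ≤ e := fun e he =>
    hDch (hCD he) ht (fun h => htC (h ▸ he))
  obtain ⟨u, hu, hugr⟩ := chain_exists_greatest (s := {e ∈ C | e ≤ t}) ⟨a, ha, (hD ht).1⟩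
    (fun x hx y hy hxy => hch hx.1 hy.1 hxy)
  obtain ⟨w, hw, hwle⟩ := chain_exists_least (s := {e ∈ C | t ≤ e}) ⟨b, hb, (hD ht).2⟩
    (fun x hx y hy hxy => hch hx.1 hy.1 hxy)
  have hut : u < t := lt_of_le_of_ne hu.2 (fun h => htC (h ▸ hu.1))
  have htw : t < w := lt_of_le_of_ne hw.2 (fun h => htC (h ▸ hw.1))
  have hcons : ConsecIn C u w := by
    refine ⟨hu.1, hw.1, hut.trans htw, fun e he ⟨h1, h2⟩ => ?_⟩
    rcases hcomp e he with h | h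
    · exact absurd (hugr e ⟨he, h⟩) h1.not_ge
    · exact absurd (hwle e ⟨he, h⟩) h2.not_ge
  exact (hsat u w hcons).2 hut htw

theorem exists_maxChainIn {a b : M} {C₀ : Set M} (h0 : C₀ ⊆ Set.Icc a b)
    (hc : IsChain (· ≤ ·) C₀) : ∃ C, C₀ ⊆ C ∧ IsMaxChainIn a b C := by
  obtain ⟨D, hD, hmax⟩ := Set.Finite.exists_maximal_wrt id
    {D : Set M | C₀ ⊆ D ∧ D ⊆ Set.Icc a b ∧ IsChain (· ≤ ·) D}
    (Set.toFinite _) ⟨C₀, subset_rfl, h0, hc⟩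
  exact ⟨D, hD.1, hD.2.1, hD.2.2, fun E hE hEch hDE => hmax E ⟨hD.1.trans hDE, hE, hEch⟩ hDE⟩

theorem covby_mem_eq_or_eq {a b w : M} (h : a ⋖ b) (h1 : a ≤ w) (h2 : w ≤ b) :
    w = a ∨ w = b := CovBy.eq_or_eq h h1 h2

end CNAux


namespace CNAux

open LatticeCongruence

variable {L : Type u} [Lattice L] [Finite L] (c : LatticeCongruence L)

theorem mkQ_eq_iff {x y : L} : c.mkQ x = c.mkQ y ↔ c.r x y :=
  ⟨fun h => Quotient.exact h, fun h => Quotient.sound h⟩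

theorem mkQ_sup (x y : L) : c.mkQ x ⊔ c.mkQ y = c.mkQ (x ⊔ y) := rfl

theorem mkQ_inf (x y : L) : c.mkQ x ⊓ c.mkQ y = c.mkQ (x ⊓ y) := rfl

theorem mkQ_le_iff {x y : L} : c.mkQ x ≤ c.mkQ y ↔ c.r (x ⊔ y) y := by
  rw [← sup_eq_right]; exact mkQ_eq_iff c

theorem mkQ_mono {x y : L} (h : x ≤ y) : c.mkQ x ≤ c.mkQ y :=
  (mkQ_le_iff c).mpr (by rw [sup_eq_right.mpr h]; exact c.refl y)

theorem r_convex {x y z : L} (h : c.r x z) (h1 : x ≤ y) (h2 : y ≤ z) : c.r x y := by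
  have h3 := c.sup_congr x z y h
  rw [sup_eq_right.mpr h1, sup_comm z y, sup_eq_right.mpr h2] at h3
  exact c.trans _ _ _ h (c.symm _ _ h3)

theorem exists_cmax (x : L) : ∃ m, c.r x m ∧ ∀ y, c.r x y → y ≤ m := by
  obtain ⟨m, hm, hgr⟩ := Set.Finite.exists_maximal_wrt id {y | c.r x y}
    (Set.toFinite _) ⟨x, c.refl x⟩
  refine ⟨m, hm, fun y hy => ?_⟩
  have h1 : c.r x (x ⊔ m) := by
    have := c.sup_congr x m x hm
    rwa [sup_idem, sup_comm m x] at this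
  have h2 : c.r (x ⊔ m) (y ⊔ m) := c.sup_congr x y m hy
  have h3 : c.r x (y ⊔ m) := c.trans _ _ _ h1 h2
  have h4 : m = y ⊔ m := hgr (y ⊔ m) h3 le_sup_right
  rw [h4]
  exact le_sup_left

theorem exists_cmin (x : L) : ∃ m, c.r x m ∧ ∀ y, c.r x y → m ≤ y := by
  obtain ⟨m, hm, hle⟩ := Set.Finite.exists_minimal_wrt id {y | c.r x y}
    (Set.toFinite _) ⟨x, c.refl x⟩
  refine ⟨m, hm, fun y hy => ?_⟩
  have h1 : c.r x (x ⊓ m) := by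
    have := c.inf_congr x m x hm
    rwa [inf_idem, inf_comm m x] at this
  have h2 : c.r (x ⊓ m) (y ⊓ m) := c.inf_congr x y m hy
  have h3 : c.r x (y ⊓ m) := c.trans _ _ _ h1 h2
  have h4 : m = y ⊓ m := hle (y ⊓ m) h3 inf_le_right
  rw [h4]
  exact inf_le_left

noncomputable def cmax (x : L) : L := (exists_cmax c x).choose

theorem r_cmax (x : L) : c.r x (cmax c x) := (exists_cmax c x).choose_spec.1

theorem le_cmax {x y : L} (h : c.r x y) : y ≤ cmax c x :=
  (exists_cmax c x).choose_spec.2 y h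

theorem self_le_cmax (x : L) : x ≤ cmax c x := le_cmax c (c.refl x)

theorem cmax_eq_of_r {x y : L} (h : c.r x y) : cmax c x = cmax c y := by
  have h1 : c.r y x := c.symm _ _ h
  exact le_antisymm (le_cmax c (c.trans _ _ _ h1 (r_cmax c x)))
    (le_cmax c (c.trans _ _ _ h (r_cmax c y)))

noncomputable def cmin (x : L) : L := (exists_cmin c x).choose

theorem r_cmin (x : L) : c.r x (cmin c x) := (exists_cmin c x).choose_spec.1

theorem cmin_le {x y : L} (h : c.r x y) : cmin c x ≤ y :=
  (exists_cmin c x).choose_spec.2 y h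

theorem cmin_le_self (x : L) : cmin c x ≤ x := cmin_le c (c.refl x)

theorem cmin_eq_of_r {x y : L} (h : c.r x y) : cmin c x = cmin c y := by
  have h1 : c.r y x := c.symm _ _ h
  exact le_antisymm (cmin_le c (c.trans _ _ _ h (r_cmin c y)))
    (cmin_le c (c.trans _ _ _ h1 (r_cmin c x)))

theorem mkQ_covby {x y : L} (h : x ⋖ y) (hr : ¬c.r x y) : c.mkQ x ⋖ c.mkQ y := by
  refine ⟨lt_of_le_of_ne (mkQ_mono c h.lt.le) (fun he => hr ((mkQ_eq_iff c).mp he)), ?_⟩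
  intro T h1 h2
  induction T using Quotient.ind with
  | _ t =>
  have h1' : c.mkQ x < c.mkQ t := h1
  have h2' : c.mkQ t < c.mkQ y := h2
  have e1 : c.mkQ (t ⊓ y) = c.mkQ t := by
    rw [← mkQ_inf]; exact inf_eq_left.mpr h2'.le
  have e2 : c.mkQ (x ⊔ (t ⊓ y)) = c.mkQ t := by
    rw [← mkQ_sup, e1]; exact sup_eq_right.mpr h1'.le
  rcases CovBy.eq_or_eq h le_sup_left (sup_le h.lt.le inf_le_right) with h3 | h3
  · exact h1'.ne' (by rw [← e2, h3])
  · exact h2'.ne (by rw [← e2, h3])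

end CNAux


namespace CNAux

open LatticeCongruence

variable {L : Type u} [Lattice L] [Finite L] {P : Type v} [PartialOrder P]

theorem lemB (lam : L → L → P) (hlam : IsCNLabeling lam) (c : LatticeCongruence L) (u : L) :
    ∀ w, c.r u w → ∀ v, w ⋖ v → ¬c.r w v →
      lam w v = lam (cmax c u) (cmax c u ⊔ v) := by
  intro w
  refine WellFounded.induction (C := fun w => c.r u w → ∀ v, w ⋖ v → ¬c.r w v →
      lam w v = lam (cmax c u) (cmax c u ⊔ v))
    (Finite.to_wellFoundedGT (α := L)).wf w ?_
  clear w
  intro w IH hru v hcov hnr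
  by_cases hwm : w = cmax c u
  · rw [← hwm, sup_eq_right.mpr hcov.lt.le]
  set m := cmax c u with hmdef
  have hrwm : c.r w m := c.trans _ _ _ (c.symm _ _ hru) (r_cmax c u)
  have hwm' : w < m := lt_of_le_of_ne (le_cmax c hru) hwm
  obtain ⟨u', hcov', hu'm⟩ := exists_covby_le hwm'
  have hrwu' : c.r w u' := r_convex c hrwm hcov'.lt.le hu'm
  have hne : v ≠ u' := fun h => hnr (h ▸ hrwu')
  have hrvs : c.r v (v ⊔ u') := by
    have h0 := c.sup_congr w u' v hrwu'
    rw [sup_comm w v, sup_eq_left.mpr hcov.lt.le, sup_comm u' v] at h0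
    exact h0
  set s := v ⊔ u' with hs
  set m₁ := m ⊓ s with hm₁def
  have hrm₁w : c.r m₁ w := by
    have h0 := c.inf_congr₂ (c.symm _ _ hrwm) (c.symm _ _ hrvs)
    rwa [inf_eq_left.mpr hcov.lt.le] at h0
  have hu'm₁ : u' ≤ m₁ := le_inf hu'm le_sup_right
  have hqcov : c.mkQ w ⋖ c.mkQ v := mkQ_covby c hcov hnr
  have hm₁_lt_s : m₁ < s := by
    refine lt_of_le_of_ne inf_le_right fun h => ?_
    have h1 : c.r w s := c.symm _ _ (h ▸ hrm₁w)
    exact hnr (r_convex c h1 hcov.lt.le le_sup_left)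
  have hcovm₁ : m₁ ⋖ s := by
    refine ⟨hm₁_lt_s, fun t h1 h2 => ?_⟩
    have htw : c.mkQ w ≤ c.mkQ t :=
      mkQ_mono c (hcov'.lt.le.trans (hu'm₁.trans h1.le))
    have hts : c.mkQ t ≤ c.mkQ v := by
      have h3 : c.mkQ t ≤ c.mkQ s := mkQ_mono c h2.le
      rwa [show c.mkQ s = c.mkQ v from (mkQ_eq_iff c).mpr (c.symm _ _ hrvs)] at h3
    rcases CovBy.eq_or_eq hqcov htw hts with hq | hq
    · have hrt : c.r t w := (mkQ_eq_iff c).mp hq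
      have h3 : t ≤ m := le_cmax c (c.trans _ _ _ hru (c.symm _ _ hrt))
      exact h1.not_ge (le_inf h3 h2.le)
    · have hrt : c.r t v := (mkQ_eq_iff c).mp hq
      have h3 : c.r (t ⊓ v) v := by
        have h4 := c.inf_congr t v v hrt
        rwa [inf_idem] at h4
      have hwtv : w ≤ t ⊓ v := le_inf (hcov'.lt.le.trans (hu'm₁.trans h1.le)) hcov.lt.le
      rcases CovBy.eq_or_eq hcov hwtv inf_le_right with h4 | h4
      · exact hnr (h4 ▸ h3)
      · have hvt : v ≤ t := h4 ▸ inf_le_left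
        exact h2.not_ge (sup_le hvt (hu'm₁.trans h1.le))
  have hnrm₁ : ¬c.r m₁ s := fun h =>
    hnr (c.trans _ _ _ (c.symm _ _ hrm₁w) (c.trans _ _ _ h (c.symm _ _ hrvs)))
  have hm₁gt : m₁ > w := lt_of_lt_of_le hcov'.lt hu'm₁
  have hrum₁ : c.r u m₁ := c.trans _ _ _ hru (c.symm _ _ hrm₁w)
  have hIH := IH m₁ hm₁gt hrum₁ s hcovm₁ hnrm₁
  have hms : m ⊔ s = m ⊔ v := by
    rw [hs, sup_comm v u', ← sup_assoc, sup_eq_left.mpr hu'm]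
  -- CN1 application in the interval [w, s]
  have hws : w ≤ s := hcov.lt.le.trans le_sup_left
  obtain ⟨C₁, hC₁sub0, hC₁⟩ := exists_maxChainIn (a := w) (b := s) (C₀ := {w, v, s})
    (by
      intro e he
      rcases he with rfl | rfl | rfl
      · exact ⟨le_rfl, hws⟩
      · exact ⟨hcov.lt.le, le_sup_left⟩
      · exact ⟨hws, le_rfl⟩)
    (by
      rintro e he f hf hef
      rcases he with rfl | rfl | rfl <;> rcases hf with rfl | rfl | rfl <;>
        first
          | exact absurd rfl hef
          | exact Or.inl hcov.lt.le
          | exact Or.inr hcov.lt.le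
          | exact Or.inl hws
          | exact Or.inr hws
          | exact Or.inl le_sup_left
          | exact Or.inr le_sup_left)
  have hvC₁ : v ∈ C₁ := hC₁sub0 (by simp)
  obtain ⟨D, hDsub0, hD⟩ := exists_maxChainIn (a := u') (b := m₁) (C₀ := {u', m₁})
    (by
      rintro e (rfl | rfl)
      · exact ⟨le_rfl, hu'm₁⟩
      · exact ⟨hu'm₁, le_rfl⟩)
    (by
      rintro e (rfl | rfl) f (rfl | rfl) hef <;>
        first
          | exact absurd rfl hef
          | exact Or.inl hu'm₁
          | exact Or.inr hu'm₁)
  have hu'D : u' ∈ D := hDsub0 (by simp)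
  have hm₁D : m₁ ∈ D := hDsub0 (by simp)
  have hDIcc : ∀ e ∈ D, u' ≤ e ∧ e ≤ m₁ := fun e he => ⟨(hD.1 he).1, (hD.1 he).2⟩
  set C₂ : Set L := insert w (insert s D) with hC₂def
  have hwC₂ : w ∈ C₂ := Set.mem_insert _ _
  have hsC₂ : s ∈ C₂ := Set.mem_insert_of_mem _ (Set.mem_insert _ _)
  have hDC₂ : ∀ e ∈ D, e ∈ C₂ := fun e he =>
    Set.mem_insert_of_mem _ (Set.mem_insert_of_mem _ he)
  have hC₂mem : ∀ e ∈ C₂, e = w ∨ e = s ∨ e ∈ D := by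
    intro e he
    rcases he with rfl | rfl | he
    · exact Or.inl rfl
    · exact Or.inr (Or.inl rfl)
    · exact Or.inr (Or.inr he)
  have hC₂le : ∀ e ∈ C₂, w ≤ e ∧ e ≤ s := by
    intro e he
    rcases hC₂mem e he with rfl | rfl | he
    · exact ⟨le_rfl, hws⟩
    · exact ⟨hws, le_rfl⟩
    · exact ⟨hcov'.lt.le.trans (hDIcc e he).1, (hDIcc e he).2.trans hm₁_lt_s.le⟩
  have hC₂ : IsMaxChainIn w s C₂ := by
    refine maxChainIn_of_saturated (fun e he => ⟨(hC₂le e he).1, (hC₂le e he).2⟩) ?_ hwC₂ hsC₂ ?_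
    · -- chain
      refine IsChain.insert (IsChain.insert hD.2.1 ?_) ?_
      · intro e he _
        exact Or.inr ((hDIcc e he).2.trans hm₁_lt_s.le)
      · intro e he _
        rcases he with rfl | he
        · exact Or.inl hws
        · exact Or.inl (hcov'.lt.le.trans (hDIcc e he).1)
    · rintro p q ⟨hp, hq, hpq, hbet⟩
      rcases hC₂mem p hp with rfl | rfl | hpD
      · -- p = w
        have hq' : q = u' := by
          rcases hC₂mem q hq with rfl | rfl | hqD
          · exact absurd hpq (lt_irrefl _)
          · exact absurd ⟨hcov'.lt, lt_of_le_of_lt hu'm₁ hm₁_lt_s⟩ (hbet u' (hDC₂ _ hu'D))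
          · by_contra hne'
            exact hbet u' (hDC₂ _ hu'D)
              ⟨hcov'.lt, lt_of_le_of_ne (hDIcc q hqD).1 (fun h => hne' h.symm)⟩
        exact hq' ▸ hcov'
      · -- p = s : impossible
        exact absurd hpq ((hC₂le q hq).2.not_gt)
      · rcases hC₂mem q hq with rfl | rfl | hqD
        · exact absurd hpq ((hcov'.lt.le.trans (hDIcc p hpD).1).not_gt)
        · -- q = s : p must be m₁
          have hp' : p = m₁ := by
            by_contra hne'
            exact hbet m₁ (hDC₂ _ hm₁D)
              ⟨lt_of_le_of_ne (hDIcc p hpD).2 hne', hm₁_lt_s⟩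
          exact hp' ▸ hcovm₁
        · -- both in D
          exact consecIn_covby hD ⟨hpD, hqD, hpq, fun e he hh => hbet e (hDC₂ e he) hh⟩
  obtain ⟨H1, H2, H3, H4⟩ := hlam.1 v u' w hne hcov hcov' C₁ C₂ hC₁ hC₂ hvC₁ (hDC₂ _ hu'D)
  have hkey : lam w v = lam m₁ s := (H2 m₁ (hDC₂ _ hm₁D) hcovm₁).symm
  rw [hkey, hIH, hms]

end CNAux


namespace CNAux

open LatticeCongruence

variable {L : Type u} [Lattice L] [Finite L] {P : Type v} [PartialOrder P]

theorem sup_cmin_eq (c : LatticeCongruence L) {w v m : L} (hcov : w ⋖ v) (hnr : ¬c.r w v)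
    (hwm : c.r w m) (hwle : w ≤ m) : m ⊔ v = m ⊔ cmin c v := by
  refine le_antisymm ?_ (sup_le_sup_left (cmin_le_self c v) m)
  refine sup_le le_sup_left ?_
  have hcl : c.r (m ⊔ cmin c v) v := by
    have h0 := c.sup_congr₂ (c.symm _ _ hwm) (c.symm _ _ (r_cmin c v))
    rwa [sup_eq_right.mpr hcov.lt.le] at h0
  have ht : c.r (v ⊓ (m ⊔ cmin c v)) v := by
    have h0 := c.inf_congr₂ (c.refl v) hcl
    rwa [inf_idem] at h0
  have hwt : w ≤ v ⊓ (m ⊔ cmin c v) :=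
    le_inf hcov.lt.le (hwle.trans le_sup_left)
  rcases CovBy.eq_or_eq hcov hwt inf_le_left with h | h
  · exact absurd (h ▸ ht) hnr
  · exact inf_eq_left.mp h

theorem wellDef (lam : L → L → P) (hlam : IsCNLabeling lam) (c : LatticeCongruence L) :
    ∀ x y x' y' : L, x ⋖ y → x' ⋖ y' → ¬c.r x y →
      c.mkQ x = c.mkQ x' → c.mkQ y = c.mkQ y' → lam x y = lam x' y' := by
  intro x y x' y' h h' hnr he1 he2
  have hr1 : c.r x x' := (mkQ_eq_iff c).mp he1
  have hr2 : c.r y y' := (mkQ_eq_iff c).mp he2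
  have hnr' : ¬c.r x' y' := fun hh =>
    hnr (c.trans _ _ _ hr1 (c.trans _ _ _ hh (c.symm _ _ hr2)))
  have e1 := lemB lam hlam c x x (c.refl x) y h hnr
  have e2 := lemB lam hlam c x x' hr1 y' h' hnr'
  suffices hsuff : cmax c x ⊔ y = cmax c x ⊔ y' by rw [e1, e2, hsuff]
  have hx'm : c.r x' (cmax c x) := c.trans _ _ _ (c.symm _ _ hr1) (r_cmax c x)
  rw [sup_cmin_eq c h hnr (r_cmax c x) (self_le_cmax c x),
    sup_cmin_eq c h' hnr' hx'm (le_cmax c hr1), cmin_eq_of_r c hr2]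

open Classical in
noncomputable def tlam (lam : L → L → P) (c : LatticeCongruence L) : c.Quo → c.Quo → P :=
  fun X Y =>
    if h : ∃ p : L × L, p.1 ⋖ p.2 ∧ ¬c.r p.1 p.2 ∧ c.mkQ p.1 = X ∧ c.mkQ p.2 = Y then
      lam h.choose.1 h.choose.2
    else lam X.out Y.out

theorem tlam_spec (lam : L → L → P) (hlam : IsCNLabeling lam) (c : LatticeCongruence L)
    {x y : L} (h : x ⋖ y) (hnr : ¬c.r x y) :
    tlam lam c (c.mkQ x) (c.mkQ y) = lam x y := by
  have hex : ∃ p : L × L, p.1 ⋖ p.2 ∧ ¬c.r p.1 p.2 ∧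
      c.mkQ p.1 = c.mkQ x ∧ c.mkQ p.2 = c.mkQ y := ⟨(x, y), h, hnr, rfl, rfl⟩
  rw [tlam, dif_pos hex]
  obtain ⟨h1, h2, h3, h4⟩ := hex.choose_spec
  exact wellDef lam hlam c _ _ x y h1 h h2 h3 h4

end CNAux


namespace CNAux

open LatticeCongruence

variable {L : Type u} [Lattice L] [Finite L]

instance (c : LatticeCongruence L) : Finite c.Quo := Quotient.finite _

theorem mkQ_out (c : LatticeCongruence L) (X : c.Quo) : c.mkQ X.out = X := Quotient.out_eq X

theorem cmin_mono (c : LatticeCongruence L) {a b : L} (h : c.mkQ a ≤ c.mkQ b) :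
    cmin c a ≤ cmin c b := by
  have h1 : c.r (a ⊓ b) a :=
    (mkQ_eq_iff c).mp (by rw [← mkQ_inf]; exact inf_eq_left.mpr h)
  have h2 : c.r (a ⊓ b) (cmin c a ⊓ cmin c b) := c.inf_congr₂ (r_cmin c a) (r_cmin c b)
  have h3 : c.r a (cmin c a ⊓ cmin c b) := c.trans _ _ _ (c.symm _ _ h1) h2
  exact (cmin_le c h3).trans inf_le_right

/-- the minimal representative of the class `X` above `m`. -/
noncomputable def rho (c : LatticeCongruence L) (m : L) (X : c.Quo) : L := m ⊔ cmin c X.out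

theorem m_le_rho (c : LatticeCongruence L) (m : L) (X : c.Quo) : m ≤ rho c m X := le_sup_left

theorem mkQ_rho (c : LatticeCongruence L) (m : L) (X : c.Quo) :
    c.mkQ (rho c m X) = c.mkQ m ⊔ X := by
  rw [rho, ← mkQ_sup]
  congr 1
  rw [show c.mkQ (cmin c X.out) = c.mkQ X.out from (mkQ_eq_iff c).mpr (c.symm _ _ (r_cmin c X.out)), mkQ_out]

theorem mkQ_rho_eq (c : LatticeCongruence L) {m : L} {Z : c.Quo} (hZ : c.mkQ m = Z)
    {X : c.Quo} (hZX : Z ≤ X) : c.mkQ (rho c m X) = X := by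
  rw [mkQ_rho, hZ]; exact sup_eq_right.mpr hZX

theorem rho_mono (c : LatticeCongruence L) (m : L) {X Y : c.Quo} (h : X ≤ Y) :
    rho c m X ≤ rho c m Y := by
  refine sup_le_sup_left (cmin_mono c ?_) m
  rw [mkQ_out, mkQ_out]
  exact h

theorem ge_rho (c : LatticeCongruence L) {m e : L} (hme : m ≤ e) : rho c m (c.mkQ e) ≤ e := by
  refine sup_le hme (cmin_le c ?_)
  exact (mkQ_eq_iff c).mp (mkQ_out c (c.mkQ e))

theorem ge_rho' (c : LatticeCongruence L) {m e : L} {X : c.Quo} (hme : m ≤ e)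
    (h : c.mkQ e = X) : rho c m X ≤ e := h ▸ ge_rho c hme

theorem rho_covby (c : LatticeCongruence L) {z : L} {X : c.Quo} (h : c.mkQ z ⋖ X) :
    cmax c z ⋖ rho c (cmax c z) X := by
  set m := cmax c z with hm
  have hmz : c.mkQ m = c.mkQ z := (mkQ_eq_iff c).mpr (c.symm _ _ (r_cmax c z))
  have hX : c.mkQ (rho c m X) = X := by
    rw [mkQ_rho, hmz]; exact sup_eq_right.mpr h.lt.le
  refine ⟨lt_of_le_of_ne (m_le_rho c m X) fun he => h.lt.ne (by rw [← hmz, he, hX]), ?_⟩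
  intro t h1 h2
  have ht1 : c.mkQ z ≤ c.mkQ t := hmz ▸ mkQ_mono c h1.le
  have ht2 : c.mkQ t ≤ X := hX ▸ mkQ_mono c h2.le
  rcases CovBy.eq_or_eq h ht1 ht2 with hq | hq
  · have hrt : c.r t m := (mkQ_eq_iff c).mp (hq.trans hmz.symm)
    have hzt : c.r z t := c.trans _ _ _ (r_cmax c z) (c.symm _ _ hrt)
    exact h1.not_ge (le_cmax c hzt)
  · exact h2.not_ge (ge_rho' c (h1.le) hq)

theorem lift_chain (c : LatticeCongruence L) {m s : L} {Z T : c.Quo}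
    (hZ : c.mkQ m = Z) (hs : c.mkQ s = T) (hms : m ≤ s) (hstop : rho c m T = s)
    {𝒞 : Set c.Quo} (h𝒞 : IsMaxChainIn Z T 𝒞) :
    ∃ C : Set L, IsMaxChainIn m s C ∧ (∀ Q ∈ 𝒞, rho c m Q ∈ C) ∧
      (∀ e ∈ C, c.mkQ e ∈ 𝒞) ∧ (∀ e ∈ C, rho c m (c.mkQ e) ≤ e) := by
  have hIcc : ∀ Q ∈ 𝒞, Z ≤ Q ∧ Q ≤ T := fun Q hQ => ⟨(h𝒞.1 hQ).1, (h𝒞.1 hQ).2⟩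
  have hRsub : (rho c m) '' 𝒞 ⊆ Set.Icc m s := by
    rintro _ ⟨Q, hQ, rfl⟩
    exact ⟨m_le_rho c m Q, hstop ▸ rho_mono c m (hIcc Q hQ).2⟩
  have hRchain : IsChain (· ≤ ·) ((rho c m) '' 𝒞) := by
    rintro _ ⟨Q, hQ, rfl⟩ _ ⟨Q', hQ', rfl⟩ hne
    have hQQ' : Q ≠ Q' := fun h => hne (by rw [h])
    rcases h𝒞.2.1 hQ hQ' hQQ' with h | h
    · exact Or.inl (rho_mono c m h)
    · exact Or.inr (rho_mono c m h)
  obtain ⟨C, hsub, hC⟩ := exists_maxChainIn hRsub hRchain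
  refine ⟨C, hC, fun Q hQ => hsub ⟨Q, hQ, rfl⟩, fun e he => ?_, fun e he => ge_rho c (hC.1 he).1⟩
  -- mkQ e ∈ 𝒞
  have hmem : ∀ Q ∈ 𝒞, c.mkQ e ≤ Q ∨ Q ≤ c.mkQ e := by
    intro Q hQ
    have hrQ : rho c m Q ∈ C := hsub ⟨Q, hQ, rfl⟩
    have hrQQ : c.mkQ (rho c m Q) = Q := mkQ_rho_eq c hZ (hIcc Q hQ).1
    rcases eq_or_ne e (rho c m Q) with rfl | hne
    · exact Or.inl (le_of_eq hrQQ)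
    rcases hC.2.1 he hrQ hne with h | h
    · exact Or.inl (hrQQ ▸ mkQ_mono c h)
    · exact Or.inr (hrQQ ▸ mkQ_mono c h)
  have hchain : IsChain (· ≤ ·) (insert (c.mkQ e) 𝒞) := by
    refine IsChain.insert h𝒞.2.1 fun Q hQ _ => hmem Q hQ
  have hsub' : insert (c.mkQ e) 𝒞 ⊆ Set.Icc Z T := by
    refine Set.insert_subset ⟨?_, ?_⟩ h𝒞.1
    · exact hZ ▸ mkQ_mono c (hC.1 he).1
    · exact hs ▸ mkQ_mono c (hC.1 he).2
  have := h𝒞.2.2 _ hsub' hchain (Set.subset_insert _ _)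
  rw [this]
  exact Set.mem_insert _ _

theorem crossing (c : LatticeCongruence L) {m s : L} {Z T : c.Quo}
    (hZ : c.mkQ m = Z) (hs : c.mkQ s = T) (hms : m ≤ s)
    {𝒞 : Set c.Quo} (h𝒞 : IsMaxChainIn Z T 𝒞) {C : Set L} (hC : IsMaxChainIn m s C)
    (hR : ∀ Q ∈ 𝒞, rho c m Q ∈ C) (hq : ∀ e ∈ C, c.mkQ e ∈ 𝒞)
    (hmin : ∀ e ∈ C, rho c m (c.mkQ e) ≤ e)
    {U V : c.Quo} (hcons : ConsecIn 𝒞 U V) :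
    ∃ uu, ConsecIn C uu (rho c m V) ∧ c.mkQ uu = U ∧ uu ⋖ rho c m V ∧
      c.mkQ (rho c m V) = V := by
  obtain ⟨hU𝒞, hV𝒞, hUV, hbet⟩ := hcons
  have hZU : Z ≤ U := (h𝒞.1 hU𝒞).1
  have hZV : Z ≤ V := (h𝒞.1 hV𝒞).1
  have hrV : c.mkQ (rho c m V) = V := mkQ_rho_eq c hZ hZV
  have hrU : c.mkQ (rho c m U) = U := mkQ_rho_eq c hZ hZU
  have hrVC : rho c m V ∈ C := hR V hV𝒞
  have hrUC : rho c m U ∈ C := hR U hU𝒞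
  have hmC : m ∈ C := (maxChainIn_mem_ends hms hC).1
  have hmrV : m < rho c m V := by
    refine lt_of_le_of_ne (m_le_rho c m V) fun h => ?_
    exact absurd (hZ ▸ h ▸ hrV : Z = V) (ne_of_lt (lt_of_le_of_lt hZU hUV))
  obtain ⟨uu, huu, hugr⟩ := chain_exists_greatest (s := {e ∈ C | e < rho c m V})
    ⟨m, hmC, hmrV⟩ (fun a ha b hb hab => hC.2.1 ha.1 hb.1 hab)
  have huuC : uu ∈ C := huu.1
  have hcons' : ConsecIn C uu (rho c m V) := by
    refine ⟨huuC, hrVC, huu.2, fun w hw ⟨h1, h2⟩ => ?_⟩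
    exact h1.not_ge (hugr w ⟨hw, h2⟩)
  have hcov : uu ⋖ rho c m V := consecIn_covby hC hcons'
  have hmkuu : c.mkQ uu = U := by
    have h1 : c.mkQ uu ∈ 𝒞 := hq uu huuC
    have hneV : c.mkQ uu ≠ V := by
      intro h
      have := hmin uu huuC
      rw [h] at this
      exact huu.2.not_ge this
    have hleV : c.mkQ uu ≤ V := hrV ▸ mkQ_mono c huu.2.le
    have hUle : U ≤ c.mkQ uu := by
      have hrUrV : rho c m U < rho c m V :=
        lt_of_le_of_ne (rho_mono c m hUV.le) (fun h => hUV.ne (by rw [← hrU, h, hrV]))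
      have : rho c m U ≤ uu := hugr _ ⟨hrUC, hrUrV⟩
      exact hrU ▸ mkQ_mono c this
    by_contra hne
    exact hbet (c.mkQ uu) h1 ⟨lt_of_le_of_ne hUle (fun h => hne h.symm), lt_of_le_of_ne hleV hneV⟩
  exact ⟨uu, hcons', hmkuu, hcov, hrV⟩

end CNAux


namespace CNAux

open LatticeCongruence

variable {L : Type u} [Lattice L] [Finite L] {P : Type v} [PartialOrder P]

theorem tlam_consec (lam : L → L → P) (hlam : IsCNLabeling lam) (c : LatticeCongruence L)
    {m s : L} {Z T : c.Quo}
    (hZ : c.mkQ m = Z) (hs : c.mkQ s = T) (hms : m ≤ s)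
    {𝒞 : Set c.Quo} (h𝒞 : IsMaxChainIn Z T 𝒞) {C : Set L} (hC : IsMaxChainIn m s C)
    (hR : ∀ Q ∈ 𝒞, rho c m Q ∈ C) (hq : ∀ e ∈ C, c.mkQ e ∈ 𝒞)
    (hmin : ∀ e ∈ C, rho c m (c.mkQ e) ≤ e)
    {U V : c.Quo} (hcons : ConsecIn 𝒞 U V) :
    ∃ uu, ConsecIn C uu (rho c m V) ∧ c.mkQ uu = U ∧ c.mkQ (rho c m V) = V ∧
      uu ⋖ rho c m V ∧ tlam lam c U V = lam uu (rho c m V) := by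
  obtain ⟨uu, hcons', hU, hcov, hV⟩ := crossing c hZ hs hms h𝒞 hC hR hq hmin hcons
  refine ⟨uu, hcons', hU, hV, hcov, ?_⟩
  have hspec := tlam_spec lam hlam c hcov fun h => hcons.2.2.1.ne
    (by rw [← hU, ← hV]; exact (mkQ_eq_iff c).mpr h)
  rw [hU, hV] at hspec
  exact hspec

theorem QCN_up (lam : L → L → P) (hlam : IsCNLabeling lam) (c : LatticeCongruence L) :
    ∀ X Y Z : c.Quo, X ≠ Y → Z ⋖ X → Z ⋖ Y →
    ∀ 𝒞₁ 𝒞₂ : Set c.Quo, IsMaxChainIn Z (X ⊔ Y) 𝒞₁ → IsMaxChainIn Z (X ⊔ Y) 𝒞₂ →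
      X ∈ 𝒞₁ → Y ∈ 𝒞₂ →
      (∀ X' ∈ 𝒞₁, X' ⋖ (X ⊔ Y) → tlam lam c X' (X ⊔ Y) = tlam lam c Z Y) ∧
      (∀ Y' ∈ 𝒞₂, Y' ⋖ (X ⊔ Y) → tlam lam c Y' (X ⊔ Y) = tlam lam c Z X) ∧
      (∀ U V : c.Quo, ConsecIn 𝒞₁ U V → Z < U → V < X ⊔ Y →
        tlam lam c Z X < tlam lam c U V ∧ tlam lam c Z Y < tlam lam c U V) ∧
      (∀ U V U' V' : c.Quo, ConsecIn 𝒞₁ U V → ConsecIn 𝒞₁ U' V' →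
        tlam lam c U V = tlam lam c U' V' → U = U' ∧ V = V') := by
  intro X Y Z hXY hZX hZY 𝒞₁ 𝒞₂ h𝒞₁ h𝒞₂ hX𝒞 hY𝒞
  set z := Z.out with hz
  set m := cmax c z with hm
  have hmZ : c.mkQ m = Z :=
    ((mkQ_eq_iff c).mpr (c.symm _ _ (r_cmax c z))).trans (mkQ_out c Z)
  have hZX' : c.mkQ z ⋖ X := by rw [hz, mkQ_out]; exact hZX
  have hZY' : c.mkQ z ⋖ Y := by rw [hz, mkQ_out]; exact hZY
  set x := rho c m X with hxd
  set y := rho c m Y with hyd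
  have hmx : m ⋖ x := rho_covby c hZX'
  have hmy : m ⋖ y := rho_covby c hZY'
  have hXx : c.mkQ x = X := mkQ_rho_eq c hmZ hZX.lt.le
  have hYy : c.mkQ y = Y := mkQ_rho_eq c hmZ hZY.lt.le
  have hxy : x ≠ y := fun h => hXY (by rw [← hXx, h, hYy])
  have hms : m ≤ x ⊔ y := hmx.lt.le.trans le_sup_left
  have hsT : c.mkQ (x ⊔ y) = X ⊔ Y := by rw [← mkQ_sup, hXx, hYy]
  have hZT : Z ≤ X ⊔ Y := hZX.lt.le.trans le_sup_left
  have hstop : rho c m (X ⊔ Y) = x ⊔ y :=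
    le_antisymm (ge_rho' c hms hsT)
      (sup_le (rho_mono c m le_sup_left) (rho_mono c m le_sup_right))
  obtain ⟨C₁, hC₁, hR₁, hq₁, hmin₁⟩ := lift_chain c hmZ hsT hms hstop h𝒞₁
  obtain ⟨C₂, hC₂, hR₂, hq₂, hmin₂⟩ := lift_chain c hmZ hsT hms hstop h𝒞₂
  have hxC₁ : x ∈ C₁ := hR₁ X hX𝒞
  have hyC₂ : y ∈ C₂ := hR₂ Y hY𝒞
  obtain ⟨H1, H2, H3, H4⟩ := hlam.1 x y m hxy hmx hmy C₁ C₂ hC₁ hC₂ hxC₁ hyC₂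
  have hnrmx : ¬c.r m x := fun h => hZX.lt.ne (by rw [← hmZ, ← hXx]; exact (mkQ_eq_iff c).mpr h)
  have hnrmy : ¬c.r m y := fun h => hZY.lt.ne (by rw [← hmZ, ← hYy]; exact (mkQ_eq_iff c).mpr h)
  have htZX : tlam lam c Z X = lam m x := by
    rw [← hmZ, ← hXx]; exact tlam_spec lam hlam c hmx hnrmx
  have htZY : tlam lam c Z Y = lam m y := by
    rw [← hmZ, ← hYy]; exact tlam_spec lam hlam c hmy hnrmy
  refine ⟨?_, ?_, ?_, ?_⟩
  · intro X' hX' hcovX'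
    have hconsX' : ConsecIn 𝒞₁ X' (X ⊔ Y) :=
      ⟨hX', (maxChainIn_mem_ends hZT h𝒞₁).2, hcovX'.lt,
        fun W _ hh => hcovX'.2 hh.1 hh.2⟩
    obtain ⟨uu, hcons', hU, hV, hcov, hval⟩ :=
      tlam_consec lam hlam c hmZ hsT hms h𝒞₁ hC₁ hR₁ hq₁ hmin₁ hconsX'
    rw [hval, htZY, hstop]
    exact H1 uu hcons'.1 (hstop ▸ hcov)
  · intro Y' hY' hcovY'
    have hconsY' : ConsecIn 𝒞₂ Y' (X ⊔ Y) :=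
      ⟨hY', (maxChainIn_mem_ends hZT h𝒞₂).2, hcovY'.lt,
        fun W _ hh => hcovY'.2 hh.1 hh.2⟩
    obtain ⟨uu, hcons', hU, hV, hcov, hval⟩ :=
      tlam_consec lam hlam c hmZ hsT hms h𝒞₂ hC₂ hR₂ hq₂ hmin₂ hconsY'
    rw [hval, htZX, hstop]
    exact H2 uu hcons'.1 (hstop ▸ hcov)
  · intro U V hcons hZU hVT
    obtain ⟨uu, hcons', hU, hV, hcov, hval⟩ :=
      tlam_consec lam hlam c hmZ hsT hms h𝒞₁ hC₁ hR₁ hq₁ hmin₁ hcons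
    have h1 : m < uu :=
      lt_of_le_of_ne (hC₁.1 hcons'.1).1 fun h => hZU.ne (by rw [← hmZ, h, hU])
    have h2 : rho c m V < x ⊔ y :=
      lt_of_le_of_ne (hC₁.1 hcons'.2.1).2 fun h => hVT.ne (by rw [← hV, h, hsT])
    have := H3 uu (rho c m V) hcons' h1 h2
    rw [hval, htZX, htZY]
    exact this
  · intro U V U' V' h1 h2 heq
    obtain ⟨u1, hc1, hU1, hV1, _, hval1⟩ :=
      tlam_consec lam hlam c hmZ hsT hms h𝒞₁ hC₁ hR₁ hq₁ hmin₁ h1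
    obtain ⟨u2, hc2, hU2, hV2, _, hval2⟩ :=
      tlam_consec lam hlam c hmZ hsT hms h𝒞₁ hC₁ hR₁ hq₁ hmin₁ h2
    have h3 := H4 u1 (rho c m V) u2 (rho c m V') hc1 hc2
      (by rw [← hval1, ← hval2]; exact heq)
    exact ⟨by rw [← hU1, h3.1, hU2], by rw [← hV1, h3.2, hV2]⟩

end CNAux


namespace CNAux

open LatticeCongruence

variable {L : Type u} [Lattice L] [Finite L] {P : Type v} [PartialOrder P]

theorem cmax_mono (c : LatticeCongruence L) {a b : L} (h : c.mkQ a ≤ c.mkQ b) :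
    cmax c a ≤ cmax c b := by
  have h1 : c.r (a ⊔ b) b :=
    (mkQ_eq_iff c).mp (by rw [← mkQ_sup]; exact sup_eq_right.mpr h)
  have h2 : c.r (a ⊔ b) (cmax c a ⊔ cmax c b) := c.sup_congr₂ (r_cmax c a) (r_cmax c b)
  have h3 : c.r b (cmax c a ⊔ cmax c b) := c.trans _ _ _ (c.symm _ _ h1) h2
  exact le_sup_left.trans (le_cmax c h3)

/-- the maximal representative of the class `X` below `m`. -/
noncomputable def rhoD (c : LatticeCongruence L) (m : L) (X : c.Quo) : L := m ⊓ cmax c X.out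

theorem rhoD_le_m (c : LatticeCongruence L) (m : L) (X : c.Quo) : rhoD c m X ≤ m := inf_le_left

theorem mkQ_rhoD (c : LatticeCongruence L) (m : L) (X : c.Quo) :
    c.mkQ (rhoD c m X) = c.mkQ m ⊓ X := by
  rw [rhoD, ← mkQ_inf]
  congr 1
  rw [show c.mkQ (cmax c X.out) = c.mkQ X.out from
    (mkQ_eq_iff c).mpr (c.symm _ _ (r_cmax c X.out)), mkQ_out]

theorem mkQ_rhoD_eq (c : LatticeCongruence L) {m : L} {Z : c.Quo} (hZ : c.mkQ m = Z)
    {X : c.Quo} (hXZ : X ≤ Z) : c.mkQ (rhoD c m X) = X := by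
  rw [mkQ_rhoD, hZ]; exact inf_eq_right.mpr hXZ

theorem rhoD_mono (c : LatticeCongruence L) (m : L) {X Y : c.Quo} (h : X ≤ Y) :
    rhoD c m X ≤ rhoD c m Y := by
  refine inf_le_inf_left m (cmax_mono c ?_)
  rw [mkQ_out, mkQ_out]
  exact h

theorem le_rhoD (c : LatticeCongruence L) {m e : L} (hme : e ≤ m) : e ≤ rhoD c m (c.mkQ e) := by
  refine le_inf hme (le_cmax c ?_)
  exact c.symm _ _ ((mkQ_eq_iff c).mp (mkQ_out c (c.mkQ e)).symm)

theorem le_rhoD' (c : LatticeCongruence L) {m e : L} {X : c.Quo} (hme : e ≤ m)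
    (h : c.mkQ e = X) : e ≤ rhoD c m X := h ▸ le_rhoD c hme

theorem rhoD_covby (c : LatticeCongruence L) {z : L} {X : c.Quo} (h : X ⋖ c.mkQ z) :
    rhoD c (cmin c z) X ⋖ cmin c z := by
  set m := cmin c z with hm
  have hmz : c.mkQ m = c.mkQ z := (mkQ_eq_iff c).mpr (c.symm _ _ (r_cmin c z))
  have hX : c.mkQ (rhoD c m X) = X := by
    rw [mkQ_rhoD, hmz]; exact inf_eq_right.mpr h.lt.le
  refine ⟨lt_of_le_of_ne (rhoD_le_m c m X) fun he => h.lt.ne (by rw [← hX, he, hmz]), ?_⟩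
  intro t h1 h2
  have ht1 : X ≤ c.mkQ t := hX ▸ mkQ_mono c h1.le
  have ht2 : c.mkQ t ≤ c.mkQ z := hmz ▸ mkQ_mono c h2.le
  rcases CovBy.eq_or_eq h ht1 ht2 with hq | hq
  · exact h1.not_ge (le_rhoD' c h2.le hq)
  · have hrt : c.r t m := (mkQ_eq_iff c).mp (hq.trans hmz.symm)
    have hzt : c.r z t := c.trans _ _ _ (r_cmin c z) (c.symm _ _ hrt)
    exact h2.not_ge (cmin_le c hzt)

theorem lift_chainD (c : LatticeCongruence L) {m s : L} {Z B : c.Quo}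
    (hZ : c.mkQ m = Z) (hs : c.mkQ s = B) (hms : s ≤ m) (hsbot : rhoD c m B = s)
    {𝒞 : Set c.Quo} (h𝒞 : IsMaxChainIn B Z 𝒞) :
    ∃ C : Set L, IsMaxChainIn s m C ∧ (∀ Q ∈ 𝒞, rhoD c m Q ∈ C) ∧
      (∀ e ∈ C, c.mkQ e ∈ 𝒞) ∧ (∀ e ∈ C, e ≤ rhoD c m (c.mkQ e)) := by
  have hIcc : ∀ Q ∈ 𝒞, B ≤ Q ∧ Q ≤ Z := fun Q hQ => ⟨(h𝒞.1 hQ).1, (h𝒞.1 hQ).2⟩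
  have hRsub : (rhoD c m) '' 𝒞 ⊆ Set.Icc s m := by
    rintro _ ⟨Q, hQ, rfl⟩
    exact ⟨hsbot ▸ rhoD_mono c m (hIcc Q hQ).1, rhoD_le_m c m Q⟩
  have hRchain : IsChain (· ≤ ·) ((rhoD c m) '' 𝒞) := by
    rintro _ ⟨Q, hQ, rfl⟩ _ ⟨Q', hQ', rfl⟩ hne
    have hQQ' : Q ≠ Q' := fun h => hne (by rw [h])
    rcases h𝒞.2.1 hQ hQ' hQQ' with h | h
    · exact Or.inl (rhoD_mono c m h)
    · exact Or.inr (rhoD_mono c m h)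
  obtain ⟨C, hsub, hC⟩ := exists_maxChainIn hRsub hRchain
  refine ⟨C, hC, fun Q hQ => hsub ⟨Q, hQ, rfl⟩, fun e he => ?_, fun e he => le_rhoD c (hC.1 he).2⟩
  have hmem : ∀ Q ∈ 𝒞, c.mkQ e ≤ Q ∨ Q ≤ c.mkQ e := by
    intro Q hQ
    have hrQ : rhoD c m Q ∈ C := hsub ⟨Q, hQ, rfl⟩
    have hrQQ : c.mkQ (rhoD c m Q) = Q := mkQ_rhoD_eq c hZ (hIcc Q hQ).2
    rcases eq_or_ne e (rhoD c m Q) with rfl | hne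
    · exact Or.inl (le_of_eq hrQQ)
    rcases hC.2.1 he hrQ hne with h | h
    · exact Or.inl (hrQQ ▸ mkQ_mono c h)
    · exact Or.inr (hrQQ ▸ mkQ_mono c h)
  have hchain : IsChain (· ≤ ·) (insert (c.mkQ e) 𝒞) :=
    IsChain.insert h𝒞.2.1 fun Q hQ _ => hmem Q hQ
  have hsub' : insert (c.mkQ e) 𝒞 ⊆ Set.Icc B Z := by
    refine Set.insert_subset ⟨?_, ?_⟩ h𝒞.1
    · exact hs ▸ mkQ_mono c (hC.1 he).1
    · exact hZ ▸ mkQ_mono c (hC.1 he).2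
  have := h𝒞.2.2 _ hsub' hchain (Set.subset_insert _ _)
  rw [this]
  exact Set.mem_insert _ _

theorem crossingD (c : LatticeCongruence L) {m s : L} {Z B : c.Quo}
    (hZ : c.mkQ m = Z) (hs : c.mkQ s = B) (hms : s ≤ m)
    {𝒞 : Set c.Quo} (h𝒞 : IsMaxChainIn B Z 𝒞) {C : Set L} (hC : IsMaxChainIn s m C)
    (hR : ∀ Q ∈ 𝒞, rhoD c m Q ∈ C) (hq : ∀ e ∈ C, c.mkQ e ∈ 𝒞)
    (hmax : ∀ e ∈ C, e ≤ rhoD c m (c.mkQ e))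
    {U V : c.Quo} (hcons : ConsecIn 𝒞 U V) :
    ∃ vv, ConsecIn C (rhoD c m U) vv ∧ c.mkQ vv = V ∧ rhoD c m U ⋖ vv ∧
      c.mkQ (rhoD c m U) = U := by
  obtain ⟨hU𝒞, hV𝒞, hUV, hbet⟩ := hcons
  have hUZ : U ≤ Z := (h𝒞.1 hU𝒞).2
  have hVZ : V ≤ Z := (h𝒞.1 hV𝒞).2
  have hrU : c.mkQ (rhoD c m U) = U := mkQ_rhoD_eq c hZ hUZ
  have hrV : c.mkQ (rhoD c m V) = V := mkQ_rhoD_eq c hZ hVZ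
  have hrUC : rhoD c m U ∈ C := hR U hU𝒞
  have hrVC : rhoD c m V ∈ C := hR V hV𝒞
  have hmC : m ∈ C := (maxChainIn_mem_ends hms hC).2
  have hrUm : rhoD c m U < m := by
    refine lt_of_le_of_ne (rhoD_le_m c m U) fun h => ?_
    exact absurd (hZ ▸ h ▸ hrU : Z = U).symm (ne_of_lt (lt_of_lt_of_le hUV hVZ))
  obtain ⟨vv, hvv, hvle⟩ := chain_exists_least (s := {e ∈ C | rhoD c m U < e})
    ⟨m, hmC, hrUm⟩ (fun a ha b hb hab => hC.2.1 ha.1 hb.1 hab)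
  have hvvC : vv ∈ C := hvv.1
  have hcons' : ConsecIn C (rhoD c m U) vv := by
    refine ⟨hrUC, hvvC, hvv.2, fun w hw ⟨h1, h2⟩ => ?_⟩
    exact h2.not_ge (hvle w ⟨hw, h1⟩)
  have hcov : rhoD c m U ⋖ vv := consecIn_covby hC hcons'
  have hmkvv : c.mkQ vv = V := by
    have h1 : c.mkQ vv ∈ 𝒞 := hq vv hvvC
    have hneU : c.mkQ vv ≠ U := by
      intro h
      have := hmax vv hvvC
      rw [h] at this
      exact hvv.2.not_ge this
    have hUle : U ≤ c.mkQ vv := hrU ▸ mkQ_mono c hvv.2.le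
    have hleV : c.mkQ vv ≤ V := by
      have hrUrV : rhoD c m U < rhoD c m V :=
        lt_of_le_of_ne (rhoD_mono c m hUV.le) (fun h => hUV.ne (by rw [← hrU, h, hrV]))
      have : vv ≤ rhoD c m V := hvle _ ⟨hrVC, hrUrV⟩
      exact hrV ▸ mkQ_mono c this
    by_contra hne
    exact hbet (c.mkQ vv) h1
      ⟨lt_of_le_of_ne hUle (fun h => hneU h.symm), lt_of_le_of_ne hleV hne⟩
  exact ⟨vv, hcons', hmkvv, hcov, hrU⟩

theorem tlam_consecD (lam : L → L → P) (hlam : IsCNLabeling lam) (c : LatticeCongruence L)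
    {m s : L} {Z B : c.Quo}
    (hZ : c.mkQ m = Z) (hs : c.mkQ s = B) (hms : s ≤ m)
    {𝒞 : Set c.Quo} (h𝒞 : IsMaxChainIn B Z 𝒞) {C : Set L} (hC : IsMaxChainIn s m C)
    (hR : ∀ Q ∈ 𝒞, rhoD c m Q ∈ C) (hq : ∀ e ∈ C, c.mkQ e ∈ 𝒞)
    (hmax : ∀ e ∈ C, e ≤ rhoD c m (c.mkQ e))
    {U V : c.Quo} (hcons : ConsecIn 𝒞 U V) :
    ∃ vv, ConsecIn C (rhoD c m U) vv ∧ c.mkQ (rhoD c m U) = U ∧ c.mkQ vv = V ∧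
      rhoD c m U ⋖ vv ∧ tlam lam c U V = lam (rhoD c m U) vv := by
  obtain ⟨vv, hcons', hV, hcov, hU⟩ := crossingD c hZ hs hms h𝒞 hC hR hq hmax hcons
  refine ⟨vv, hcons', hU, hV, hcov, ?_⟩
  have hspec := tlam_spec lam hlam c hcov fun h => hcons.2.2.1.ne
    (by rw [← hU, ← hV]; exact (mkQ_eq_iff c).mpr h)
  rw [hU, hV] at hspec
  exact hspec

theorem QCN_down (lam : L → L → P) (hlam : IsCNLabeling lam) (c : LatticeCongruence L) :
    ∀ X Y Z : c.Quo, X ≠ Y → X ⋖ Z → Y ⋖ Z →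
    ∀ 𝒞₁ 𝒞₂ : Set c.Quo, IsMaxChainIn (X ⊓ Y) Z 𝒞₁ → IsMaxChainIn (X ⊓ Y) Z 𝒞₂ →
      X ∈ 𝒞₁ → Y ∈ 𝒞₂ →
      (∀ X' ∈ 𝒞₁, (X ⊓ Y) ⋖ X' → tlam lam c (X ⊓ Y) X' = tlam lam c Y Z) ∧
      (∀ Y' ∈ 𝒞₂, (X ⊓ Y) ⋖ Y' → tlam lam c (X ⊓ Y) Y' = tlam lam c X Z) ∧
      (∀ U V : c.Quo, ConsecIn 𝒞₁ U V → X ⊓ Y < U → V < Z →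
        tlam lam c X Z < tlam lam c U V ∧ tlam lam c Y Z < tlam lam c U V) ∧
      (∀ U V U' V' : c.Quo, ConsecIn 𝒞₁ U V → ConsecIn 𝒞₁ U' V' →
        tlam lam c U V = tlam lam c U' V' → U = U' ∧ V = V') := by
  intro X Y Z hXY hXZ hYZ 𝒞₁ 𝒞₂ h𝒞₁ h𝒞₂ hX𝒞 hY𝒞
  set z := Z.out with hz
  set m := cmin c z with hm
  have hmZ : c.mkQ m = Z :=
    ((mkQ_eq_iff c).mpr (c.symm _ _ (r_cmin c z))).trans (mkQ_out c Z)
  have hXZ' : X ⋖ c.mkQ z := by rw [hz, mkQ_out]; exact hXZ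
  have hYZ' : Y ⋖ c.mkQ z := by rw [hz, mkQ_out]; exact hYZ
  set x := rhoD c m X with hxd
  set y := rhoD c m Y with hyd
  have hxm : x ⋖ m := rhoD_covby c hXZ'
  have hym : y ⋖ m := rhoD_covby c hYZ'
  have hXx : c.mkQ x = X := mkQ_rhoD_eq c hmZ hXZ.lt.le
  have hYy : c.mkQ y = Y := mkQ_rhoD_eq c hmZ hYZ.lt.le
  have hxy : x ≠ y := fun h => hXY (by rw [← hXx, h, hYy])
  have hms : x ⊓ y ≤ m := inf_le_left.trans hxm.lt.le
  have hsB : c.mkQ (x ⊓ y) = X ⊓ Y := by rw [← mkQ_inf, hXx, hYy]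
  have hBZ : X ⊓ Y ≤ Z := inf_le_left.trans hXZ.lt.le
  have hsbot : rhoD c m (X ⊓ Y) = x ⊓ y :=
    le_antisymm (le_inf (rhoD_mono c m inf_le_left) (rhoD_mono c m inf_le_right))
      (le_rhoD' c hms hsB)
  obtain ⟨C₁, hC₁, hR₁, hq₁, hmax₁⟩ := lift_chainD c hmZ hsB hms hsbot h𝒞₁
  obtain ⟨C₂, hC₂, hR₂, hq₂, hmax₂⟩ := lift_chainD c hmZ hsB hms hsbot h𝒞₂
  have hxC₁ : x ∈ C₁ := hR₁ X hX𝒞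
  have hyC₂ : y ∈ C₂ := hR₂ Y hY𝒞
  obtain ⟨H1, H2, H3, H4⟩ := hlam.2 x y m hxy hxm hym C₁ C₂ hC₁ hC₂ hxC₁ hyC₂
  have hnrxm : ¬c.r x m := fun h => hXZ.lt.ne (by rw [← hmZ, ← hXx]; exact (mkQ_eq_iff c).mpr h)
  have hnrym : ¬c.r y m := fun h => hYZ.lt.ne (by rw [← hmZ, ← hYy]; exact (mkQ_eq_iff c).mpr h)
  have htXZ : tlam lam c X Z = lam x m := by
    rw [← hmZ, ← hXx]; exact tlam_spec lam hlam c hxm hnrxm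
  have htYZ : tlam lam c Y Z = lam y m := by
    rw [← hmZ, ← hYy]; exact tlam_spec lam hlam c hym hnrym
  refine ⟨?_, ?_, ?_, ?_⟩
  · intro X' hX' hcovX'
    have hconsX' : ConsecIn 𝒞₁ (X ⊓ Y) X' :=
      ⟨(maxChainIn_mem_ends hBZ h𝒞₁).1, hX', hcovX'.lt,
        fun W _ hh => hcovX'.2 hh.1 hh.2⟩
    obtain ⟨vv, hcons', hU, hV, hcov, hval⟩ :=
      tlam_consecD lam hlam c hmZ hsB hms h𝒞₁ hC₁ hR₁ hq₁ hmax₁ hconsX'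
    rw [hval, htYZ, hsbot]
    exact H1 vv hcons'.2.1 (hsbot ▸ hcov)
  · intro Y' hY' hcovY'
    have hconsY' : ConsecIn 𝒞₂ (X ⊓ Y) Y' :=
      ⟨(maxChainIn_mem_ends hBZ h𝒞₂).1, hY', hcovY'.lt,
        fun W _ hh => hcovY'.2 hh.1 hh.2⟩
    obtain ⟨vv, hcons', hU, hV, hcov, hval⟩ :=
      tlam_consecD lam hlam c hmZ hsB hms h𝒞₂ hC₂ hR₂ hq₂ hmax₂ hconsY'
    rw [hval, htXZ, hsbot]
    exact H2 vv hcons'.2.1 (hsbot ▸ hcov)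
  · intro U V hcons hBU hVZ'
    obtain ⟨vv, hcons', hU, hV, hcov, hval⟩ :=
      tlam_consecD lam hlam c hmZ hsB hms h𝒞₁ hC₁ hR₁ hq₁ hmax₁ hcons
    have h1 : x ⊓ y < rhoD c m U :=
      lt_of_le_of_ne (hC₁.1 hcons'.1).1 fun h => hBU.ne (by rw [← hsB, h, hU])
    have h2 : vv < m :=
      lt_of_le_of_ne (hC₁.1 hcons'.2.1).2 fun h => hVZ'.ne (by rw [← hV, h, hmZ])
    have := H3 (rhoD c m U) vv hcons' h1 h2
    rw [hval, htXZ, htYZ]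
    exact this
  · intro U V U' V' h1 h2 heq
    obtain ⟨v1, hc1, hU1, hV1, _, hval1⟩ :=
      tlam_consecD lam hlam c hmZ hsB hms h𝒞₁ hC₁ hR₁ hq₁ hmax₁ h1
    obtain ⟨v2, hc2, hU2, hV2, _, hval2⟩ :=
      tlam_consecD lam hlam c hmZ hsB hms h𝒞₁ hC₁ hR₁ hq₁ hmax₁ h2
    have h3 := H4 (rhoD c m U) v1 (rhoD c m U') v2 hc1 hc2
      (by rw [← hval1, ← hval2]; exact heq)
    exact ⟨by rw [← hU1, h3.1, hU2], by rw [← hV1, h3.2, hV2]⟩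

end CNAux


/-- A CN-labeling of `L` induces a well-defined CN-labeling of any
quotient `L/Θ`, by labeling a covering pair of the quotient with the label of any
representing covering pair of `L`. -/
theorem cn_labeling_descends_to_quotient
    {L : Type u} [Lattice L] [Fintype L] {P : Type v} [PartialOrder P]
    (lam : L → L → P) (hlam : IsCNLabeling lam) (c : LatticeCongruence L) :
    (∀ x y x' y' : L, x ⋖ y → x' ⋖ y' → ¬c.r x y →
        c.mkQ x = c.mkQ x' → c.mkQ y = c.mkQ y' → lam x y = lam x' y') ∧
      ∃ tlam : c.Quo → c.Quo → P,
        (∀ x y : L, x ⋖ y → ¬c.r x y → tlam (c.mkQ x) (c.mkQ y) = lam x y) ∧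
        IsCNLabeling tlam := by
  refine ⟨CNAux.wellDef lam hlam c, CNAux.tlam lam c,
    fun x y h hnr => CNAux.tlam_spec lam hlam c h hnr, ?_, ?_⟩
  · exact CNAux.QCN_up lam hlam c
  · exact CNAux.QCN_down lam hlam c
end

section
/- Let L be a finite lattice with a CU-labeling λ : Cov(L) → P. The Kreweras map Kr : L → L, which sends each x ∈ L to the unique element y ∈ L with λ↑(x) = λ↓(y), is a well-defined bijection of L onto itself. -/
universe u v

namespace Kreweras

variable {L : Type u} [Lattice L] [Fintype L]

lemma measure_lt {a b : L} (h : a < b) : (Set.Iic a).ncard < (Set.Iic b).ncard := by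
  apply Set.ncard_lt_ncard _ (Set.toFinite _)
  rw [Set.ssubset_def]
  exact ⟨fun x hx => le_trans hx h.le, fun hsub => h.not_ge (hsub (le_refl b))⟩

lemma measure_lt' {a b : L} (h : a < b) : (Set.Ici b).ncard < (Set.Ici a).ncard := by
  apply Set.ncard_lt_ncard _ (Set.toFinite _)
  rw [Set.ssubset_def]
  exact ⟨fun x hx => le_trans h.le hx, fun hsub => h.not_ge (hsub (le_refl a))⟩

lemma exists_covby_le {a b : L} (h : a < b) : ∃ c, a ⋖ c ∧ c ≤ b := by
  obtain ⟨c, hc, hmin⟩ := Set.Finite.exists_minimalFor id {t : L | a < t ∧ t ≤ b}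
    (Set.toFinite _) ⟨b, h, le_rfl⟩
  exact ⟨c, ⟨hc.1, fun d hd1 hd2 =>
    absurd (hmin ⟨hd1, hd2.le.trans hc.2⟩ hd2.le) hd2.not_ge⟩, hc.2⟩

lemma exists_le_covby {a b : L} (h : a < b) : ∃ c, a ≤ c ∧ c ⋖ b := by
  obtain ⟨c, hc, hmax⟩ := Set.Finite.exists_maximalFor id {t : L | a ≤ t ∧ t < b}
    (Set.toFinite _) ⟨a, le_rfl, h⟩
  exact ⟨c, hc.1, hc.2, fun d hd1 hd2 =>
    absurd (hmax ⟨hc.1.trans hd1.le, hd2⟩ hd1.le) hd1.not_ge⟩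

lemma isChain_quint {a b c d e : L} (h1 : a ≤ b) (h2 : b ≤ c) (h3 : c ≤ d) (h4 : d ≤ e) :
    IsChain (· ≤ ·) ({a, b, c, d, e} : Set L) := by
  have hac : a ≤ c := h1.trans h2
  have had : a ≤ d := hac.trans h3
  have hae : a ≤ e := had.trans h4
  have hbd : b ≤ d := h2.trans h3
  have hbe : b ≤ e := hbd.trans h4
  have hce : c ≤ e := h3.trans h4
  intro x hx y hy _
  simp only [Set.mem_insert_iff, Set.mem_singleton_iff] at hx hy
  rcases hx with rfl|rfl|rfl|rfl|rfl <;> rcases hy with rfl|rfl|rfl|rfl|rfl <;>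
    first
      | exact Or.inl le_rfl
      | exact Or.inl (by assumption)
      | exact Or.inr (by assumption)

lemma exists_maxChainIn {a b : L} (C₀ : Set L) (hchain : IsChain (· ≤ ·) C₀)
    (hsub : C₀ ⊆ Set.Icc a b) : ∃ C, IsMaxChainIn a b C ∧ C₀ ⊆ C := by
  classical
  let C₀' : Set (Set.Icc a b) := {x | (x : L) ∈ C₀}
  have hchain' : IsChain (· ≤ ·) C₀' := by
    intro x hx y hy hxy
    exact hchain hx hy (fun h => hxy (Subtype.ext h))
  obtain ⟨M, hMmax, hM0⟩ := hchain'.exists_maxChain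
  refine ⟨Subtype.val '' M, ⟨?_, ?_, ?_⟩, ?_⟩
  · rintro _ ⟨x, _, rfl⟩; exact x.2
  · rintro _ ⟨x, hx, rfl⟩ _ ⟨y, hy, rfl⟩ hne
    exact hMmax.1 hx hy (fun h => hne (congrArg _ h))
  · intro D hD hDchain hCD
    let D' : Set (Set.Icc a b) := {x | (x : L) ∈ D}
    have hD'chain : IsChain (· ≤ ·) D' := by
      intro x hx y hy hxy
      exact hDchain hx hy (fun h => hxy (Subtype.ext h))
    have hMD' : M ⊆ D' := fun x hx => hCD ⟨x, hx, rfl⟩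
    have hMeq : M = D' := hMmax.2 hD'chain hMD'
    ext z
    constructor
    · rintro ⟨x, hx, rfl⟩
      rw [hMeq] at hx
      exact hx
    · intro hz
      have hz' : (⟨z, hD hz⟩ : Set.Icc a b) ∈ D' := hz
      rw [← hMeq] at hz'
      exact ⟨_, hz', rfl⟩
  · intro c hc
    exact ⟨⟨c, hsub hc⟩, hM0 hc, rfl⟩

lemma maxChain_left_mem {a b : L} {C : Set L} (h : IsMaxChainIn a b C) (hab : a ≤ b) :
    a ∈ C := by
  by_contra ha
  have heq := h.2.2 (insert a C) ?_ ?_ (Set.subset_insert _ _)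
  · exact ha (heq ▸ Set.mem_insert a C)
  · intro x hx
    rcases Set.mem_insert_iff.1 hx with rfl | hx
    · exact ⟨le_rfl, hab⟩
    · exact h.1 hx
  · exact h.2.1.insert (fun x hx _ => Or.inl (h.1 hx).1)

lemma maxChain_right_mem {a b : L} {C : Set L} (h : IsMaxChainIn a b C) (hab : a ≤ b) :
    b ∈ C := by
  by_contra hb
  have heq := h.2.2 (insert b C) ?_ ?_ (Set.subset_insert _ _)
  · exact hb (heq ▸ Set.mem_insert b C)
  · intro x hx
    rcases Set.mem_insert_iff.1 hx with rfl | hx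
    · exact ⟨hab, le_rfl⟩
    · exact h.1 hx
  · exact h.2.1.insert (fun x hx _ => Or.inr (h.1 hx).2)

lemma maxChain_exists_covby_top {a b : L} {C : Set L} (h : IsMaxChainIn a b C)
    (hab : a < b) : ∃ c ∈ C, c ⋖ b := by
  classical
  have hbC := maxChain_right_mem h hab.le
  have haC := maxChain_left_mem h hab.le
  obtain ⟨c, hc, hcmax⟩ := Set.Finite.exists_maximalFor id (C \ {b}) (Set.toFinite _)
    ⟨a, haC, by simp [hab.ne]⟩
  have hcb : c < b := lt_of_le_of_ne (h.1 hc.1).2 (by simpa using hc.2)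
  have hle : ∀ x ∈ C, x ≠ b → x ≤ c := by
    intro x hx hxb
    by_cases hxc : x = c
    · exact hxc.le
    rcases h.2.1 hx hc.1 hxc with h1 | h1
    · exact h1
    · exact hcmax ⟨hx, by simp [hxb]⟩ h1
  refine ⟨c, hc.1, hcb, fun d hcd hdb => ?_⟩
  have hdC : d ∉ C := fun hd => absurd (hle d hd hdb.ne) hcd.not_ge
  have heq := h.2.2 (insert d C) ?_ ?_ (Set.subset_insert _ _)
  · exact hdC (heq ▸ Set.mem_insert d C)
  · intro x hx
    rcases Set.mem_insert_iff.1 hx with rfl | hx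
    · exact ⟨(h.1 haC).1.trans (hle a haC hab.ne |>.trans hcd.le), hdb.le⟩
    · exact h.1 hx
  · refine h.2.1.insert (fun x hx hne => ?_)
    by_cases hxb : x = b
    · exact Or.inl (hxb ▸ hdb.le)
    · exact Or.inr ((hle x hx hxb).trans hcd.le)

lemma maxChain_exists_covby_bot {a b : L} {C : Set L} (h : IsMaxChainIn a b C)
    (hab : a < b) : ∃ c ∈ C, a ⋖ c := by
  classical
  have hbC := maxChain_right_mem h hab.le
  have haC := maxChain_left_mem h hab.le
  obtain ⟨c, hc, hcmin⟩ := Set.Finite.exists_minimalFor id (C \ {a}) (Set.toFinite _)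
    ⟨b, hbC, by simp [hab.ne']⟩
  have hac : a < c := lt_of_le_of_ne (h.1 hc.1).1 (by simpa using fun h' => hc.2 h'.symm)
  have hle : ∀ x ∈ C, x ≠ a → c ≤ x := by
    intro x hx hxa
    by_cases hxc : x = c
    · exact hxc.ge
    rcases h.2.1 hx hc.1 hxc with h1 | h1
    · exact hcmin ⟨hx, by simp [hxa]⟩ h1
    · exact h1
  refine ⟨c, hc.1, hac, fun d had hdc => ?_⟩
  have hdC : d ∉ C := fun hd => absurd (hle d hd had.ne') hdc.not_ge
  have heq := h.2.2 (insert d C) ?_ ?_ (Set.subset_insert _ _)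
  · exact hdC (heq ▸ Set.mem_insert d C)
  · intro x hx
    rcases Set.mem_insert_iff.1 hx with rfl | hx
    · exact ⟨had.le, hdc.le.trans (hle b hbC hab.ne' |>.trans (h.1 hbC).2)⟩
    · exact h.1 hx
  · refine h.2.1.insert (fun x hx hne => ?_)
    by_cases hxa : x = a
    · exact Or.inr (hxa ▸ had.le)
    · exact Or.inl (hdc.le.trans (hle x hx hxa))

lemma consecIn_of_covby {C : Set L} {u v : L} (hu : u ∈ C) (hv : v ∈ C) (huv : u ⋖ v) :
    ConsecIn C u v := ⟨hu, hv, huv.lt, fun w _ hw => huv.2 hw.1 hw.2⟩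

lemma lt_le_star {j a t : L} (hj : SupIrred j) (ha : a ⋖ j) (ht : t < j) : t ≤ a := by
  have h1 : t ⊔ a ≤ j := sup_le ht.le ha.lt.le
  rcases eq_or_lt_of_le h1 with heq | hlt
  · rcases hj.2 heq with h | h
    · exact absurd h ht.ne
    · exact absurd h ha.lt.ne
  · by_contra hta
    exact ha.2 (lt_of_le_of_ne le_sup_right (fun h => hta (h ▸ le_sup_left))) hlt

lemma star_unique {j a a' : L} (hj : SupIrred j) (ha : a ⋖ j) (ha' : a' ⋖ j) : a = a' :=
  le_antisymm (lt_le_star hj ha' ha.lt) (lt_le_star hj ha ha'.lt)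

lemma gt_ge_costar {m b t : L} (hm : InfIrred m) (hb : m ⋖ b) (ht : m < t) : b ≤ t := by
  have h1 : m ≤ t ⊓ b := le_inf ht.le hb.lt.le
  rcases eq_or_lt_of_le h1 with heq | hlt
  · rcases hm.2 heq.symm with h | h
    · exact absurd h ht.ne'
    · exact absurd h hb.lt.ne'
  · by_contra htb
    exact hb.2 hlt (lt_of_le_of_ne inf_le_right (fun h => htb (h ▸ inf_le_left)))

lemma costar_unique {m b b' : L} (hm : InfIrred m) (hb : m ⋖ b) (hb' : m ⋖ b') : b = b' := by
  have h1 : b ≤ b' := gt_ge_costar hm hb hb'.lt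
  have h2 : b' ≤ b := gt_ge_costar hm hb' hb.lt
  exact le_antisymm h1 h2

end Kreweras

namespace Kreweras2

open Kreweras

variable {L : Type u} [Lattice L] [Fintype L] {P : Type v} [PartialOrder P]

lemma quint_subset_Icc {lo a b c d e hi : L} (h0 : lo ≤ a) (h1 : a ≤ b) (h2 : b ≤ c)
    (h3 : c ≤ d) (h4 : d ≤ e) (h5 : e ≤ hi) : ({a, b, c, d, e} : Set L) ⊆ Set.Icc lo hi := by
  intro t ht
  simp only [Set.mem_insert_iff, Set.mem_singleton_iff] at ht
  rcases ht with rfl|rfl|rfl|rfl|rfl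
  · exact ⟨h0, h1.trans (h2.trans (h3.trans (h4.trans h5)))⟩
  · exact ⟨h0.trans h1, h2.trans (h3.trans (h4.trans h5))⟩
  · exact ⟨h0.trans (h1.trans h2), h3.trans (h4.trans h5)⟩
  · exact ⟨h0.trans (h1.trans (h2.trans h3)), h4.trans h5⟩
  · exact ⟨h0.trans (h1.trans (h2.trans (h3.trans h4))), h5⟩

variable {lam : L → L → P}

/-- Distinct upper covers of a common element have distinct labels. -/
lemma label_inj_above (hcu : IsCULabeling lam) {z x y : L}
    (hx : z ⋖ x) (hy : z ⋖ y) (hl : lam z x = lam z y) : x = y := by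
  by_contra hne
  have hnylt : ¬ y < x := hx.2 hy.lt
  have hxlt : x < x ⊔ y := lt_of_le_of_ne le_sup_left
    (fun heq => hnylt (lt_of_le_of_ne (le_sup_right.trans heq.ge) (Ne.symm hne)))
  have hzs : z ≤ x ⊔ y := hx.lt.le.trans le_sup_left
  obtain ⟨C₁, hC₁, hsub₁⟩ := exists_maxChainIn {z, x, x ⊔ y, x ⊔ y, x ⊔ y}
    (isChain_quint hx.lt.le hxlt.le le_rfl le_rfl)
    (quint_subset_Icc le_rfl hx.lt.le hxlt.le le_rfl le_rfl le_rfl)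
  obtain ⟨C₂, hC₂, hsub₂⟩ := exists_maxChainIn {z, y, x ⊔ y, x ⊔ y, x ⊔ y}
    (isChain_quint hy.lt.le le_sup_right le_rfl le_rfl)
    (quint_subset_Icc le_rfl hy.lt.le le_sup_right le_rfl le_rfl le_rfl)
  have hzC₁ : z ∈ C₁ := hsub₁ (by simp)
  have hxC₁ : x ∈ C₁ := hsub₁ (by simp)
  have hsC₁ : (x ⊔ y) ∈ C₁ := hsub₁ (by simp)
  have hyC₂ : y ∈ C₂ := hsub₂ (by simp)
  obtain ⟨cl1, _, _, cl4⟩ := hcu.1.1 x y z hne hx hy C₁ C₂ hC₁ hC₂ hxC₁ hyC₂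
  obtain ⟨c, hcC, hcs⟩ := maxChain_exists_covby_top hC₁ (hx.lt.trans_le le_sup_left)
  have hlab : lam c (x ⊔ y) = lam z y := cl1 c hcC hcs
  have h4 := cl4 z x c (x ⊔ y) (consecIn_of_covby hzC₁ hxC₁ hx)
    (consecIn_of_covby hcC hsC₁ hcs) (by rw [hl, ← hlab])
  exact hnylt (lt_of_le_of_ne (le_sup_right.trans h4.2.ge) (Ne.symm hne))

/-- Distinct lower covers of a common element have distinct labels. -/
lemma label_inj_below (hcu : IsCULabeling lam) {z x y : L}
    (hx : x ⋖ z) (hy : y ⋖ z) (hl : lam x z = lam y z) : x = y := by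
  by_contra hne
  have hnylt : ¬ x < y := fun h => hx.2 h hy.lt
  have hxlt : x ⊓ y < x := lt_of_le_of_ne inf_le_left
    (fun heq => hnylt (lt_of_le_of_ne (heq.ge.trans inf_le_right) hne))
  have hzs : x ⊓ y ≤ z := inf_le_left.trans hx.lt.le
  obtain ⟨C₁, hC₁, hsub₁⟩ := exists_maxChainIn {x ⊓ y, x ⊓ y, x ⊓ y, x, z}
    (isChain_quint le_rfl le_rfl inf_le_left hx.lt.le)
    (quint_subset_Icc le_rfl le_rfl le_rfl inf_le_left hx.lt.le le_rfl)
  obtain ⟨C₂, hC₂, hsub₂⟩ := exists_maxChainIn {x ⊓ y, x ⊓ y, x ⊓ y, y, z}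
    (isChain_quint le_rfl le_rfl inf_le_right hy.lt.le)
    (quint_subset_Icc le_rfl le_rfl le_rfl inf_le_right hy.lt.le le_rfl)
  have hzC₁ : (x ⊓ y) ∈ C₁ := hsub₁ (by simp)
  have hxC₁ : x ∈ C₁ := hsub₁ (by simp)
  have hsC₁ : z ∈ C₁ := hsub₁ (by simp)
  have hyC₂ : y ∈ C₂ := hsub₂ (by simp)
  obtain ⟨cl1, _, _, cl4⟩ := hcu.1.2 x y z hne hx hy C₁ C₂ hC₁ hC₂ hxC₁ hyC₂
  obtain ⟨c, hcC, hcs⟩ := maxChain_exists_covby_bot hC₁ (lt_of_lt_of_le hxlt hx.lt.le)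
  have hlab : lam (x ⊓ y) c = lam y z := cl1 c hcC hcs
  have h4 := cl4 (x ⊓ y) c x z (consecIn_of_covby hzC₁ hcC hcs)
    (consecIn_of_covby hxC₁ hsC₁ hx) (by rw [hlab, hl])
  exact absurd h4.1 hxlt.ne

/-- The label of any atom of `[w₁ ⊓ w₂, w₂]` equals `lam w₁ y`. -/
lemma atom_label (hcu : IsCULabeling lam) {w₁ w₂ y α : L} (h1 : w₁ ⋖ y) (h2 : w₂ ⋖ y)
    (hne : w₁ ≠ w₂) (hα : (w₁ ⊓ w₂) ⋖ α) (hαw : α ≤ w₂) :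
    lam (w₁ ⊓ w₂) α = lam w₁ y := by
  obtain ⟨C₁, hC₁, hsub₁⟩ := exists_maxChainIn {w₁ ⊓ w₂, w₁ ⊓ w₂, w₁ ⊓ w₂, w₁, y}
    (isChain_quint le_rfl le_rfl inf_le_left h1.lt.le)
    (quint_subset_Icc le_rfl le_rfl le_rfl inf_le_left h1.lt.le le_rfl)
  obtain ⟨C₂, hC₂, hsub₂⟩ := exists_maxChainIn {w₁ ⊓ w₂, α, w₂, y, y}
    (isChain_quint hα.lt.le hαw h2.lt.le le_rfl)
    (quint_subset_Icc le_rfl hα.lt.le hαw h2.lt.le le_rfl le_rfl)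
  obtain ⟨_, cl2, _, _⟩ := hcu.1.2 w₁ w₂ y hne h1 h2 C₁ C₂ hC₁ hC₂
    (hsub₁ (by simp)) (hsub₂ (by simp))
  exact cl2 α (hsub₂ (by simp)) hα

/-- The label of any coatom of `[w, v ⊔ w]` above `w` equals `lam x v`. -/
lemma coatom_label (hcu : IsCULabeling lam) {x v w c : L} (h1 : x ⋖ v) (h2 : x ⋖ w)
    (hne : v ≠ w) (hc : c ⋖ (v ⊔ w)) (hwc : w ≤ c) :
    lam c (v ⊔ w) = lam x v := by
  obtain ⟨C₁, hC₁, hsub₁⟩ := exists_maxChainIn {x, v, v ⊔ w, v ⊔ w, v ⊔ w}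
    (isChain_quint h1.lt.le le_sup_left le_rfl le_rfl)
    (quint_subset_Icc le_rfl h1.lt.le le_sup_left le_rfl le_rfl le_rfl)
  obtain ⟨C₂, hC₂, hsub₂⟩ := exists_maxChainIn {x, w, c, v ⊔ w, v ⊔ w}
    (isChain_quint h2.lt.le hwc hc.lt.le le_rfl)
    (quint_subset_Icc le_rfl h2.lt.le hwc hc.lt.le le_rfl le_rfl)
  obtain ⟨_, cl2, _, _⟩ := hcu.1.1 v w x hne h1 h2 C₁ C₂ hC₁ hC₂
    (hsub₁ (by simp)) (hsub₂ (by simp))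
  exact cl2 c (hsub₂ (by simp)) hc

/-- The minimum atom of `[w₁ ⊓ w₂, w₂]`. -/
lemma exists_min_atom (hcu : IsCULabeling lam) {w₁ w₂ y : L} (h1 : w₁ ⋖ y) (h2 : w₂ ⋖ y)
    (hne : w₁ ≠ w₂) :
    ∃ a, (w₁ ⊓ w₂) ⋖ a ∧ a ≤ w₂ ∧ lam (w₁ ⊓ w₂) a = lam w₁ y ∧
      ∀ t, w₁ ⊓ w₂ < t → t ≤ w₂ → a ≤ t := by
  have hqw : w₁ ⊓ w₂ < w₂ := lt_of_le_of_ne inf_le_right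
    (fun h => h2.2 (lt_of_le_of_ne (h ▸ inf_le_left) (Ne.symm hne)) h1.lt)
  obtain ⟨a, ha, haw⟩ := exists_covby_le hqw
  refine ⟨a, ha, haw, atom_label hcu h1 h2 hne ha haw, fun t hqt htw => ?_⟩
  obtain ⟨a', ha', ha't⟩ := exists_covby_le hqt
  have : a = a' := label_inj_above hcu ha ha'
    (by rw [atom_label hcu h1 h2 hne ha haw, atom_label hcu h1 h2 hne ha' (ha't.trans htw)])
  exact this ▸ ha't

/-- The maximum coatom of `[w, v ⊔ w]`. -/
lemma exists_max_coatom (hcu : IsCULabeling lam) {x v w : L} (h1 : x ⋖ v) (h2 : x ⋖ w)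
    (hne : v ≠ w) :
    ∃ c, c ⋖ (v ⊔ w) ∧ w ≤ c ∧ lam c (v ⊔ w) = lam x v ∧
      ∀ t, t < v ⊔ w → w ≤ t → t ≤ c := by
  have hqw : w < v ⊔ w := lt_of_le_of_ne le_sup_right
    (fun h => h2.2 h1.lt (lt_of_le_of_ne (le_sup_left.trans h.ge) hne))
  obtain ⟨c, hwc, hc⟩ := exists_le_covby hqw
  refine ⟨c, hc, hwc, coatom_label hcu h1 h2 hne hc hwc, fun t htq hwt => ?_⟩
  obtain ⟨c', htc', hc'⟩ := exists_le_covby htq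
  have : c = c' := label_inj_below hcu hc hc'
    (by rw [coatom_label hcu h1 h2 hne hc hwc, coatom_label hcu h1 h2 hne hc' (hwt.trans htc')])
  exact this ▸ htc'

/-- Lemma A: every cover label is realised by a join-irreducible. -/
lemma exists_jhat_aux (hcu : IsCULabeling lam) : ∀ n : ℕ, ∀ {w y : L},
    (Set.Iic y).ncard ≤ n → w ⋖ y →
    ∃ j a, SupIrred j ∧ a ⋖ j ∧ j ≤ y ∧ ¬ j ≤ w ∧ a ≤ w ∧ lam a j = lam w y := by
  intro n
  induction n with
  | zero =>
    intro w y hn hw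
    have hpos : 0 < (Set.Iic y).ncard := (Set.ncard_pos (Set.toFinite _)).2 ⟨y, le_rfl⟩
    omega
  | succ n ih =>
    intro w y hn hw
    by_cases hcase : ∀ x, x < y → x ≤ w
    · refine ⟨y, w, ⟨?_, ?_⟩, hw, le_rfl, hw.lt.not_ge, le_rfl, rfl⟩
      · intro hmin
        exact hw.lt.not_ge (hmin hw.lt.le)
      · intro b c hbc
        by_contra hcon
        push_neg at hcon
        have hb : b < y := lt_of_le_of_ne (hbc ▸ le_sup_left) hcon.1
        have hc : c < y := lt_of_le_of_ne (hbc ▸ le_sup_right) hcon.2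
        exact hw.lt.not_ge (hbc ▸ sup_le (hcase b hb) (hcase c hc))
    · push_neg at hcase
      obtain ⟨x₀, hx₀y, hx₀w⟩ := hcase
      obtain ⟨w', hx₀w', hw'⟩ := exists_le_covby hx₀y
      have hne : w ≠ w' := fun h => hx₀w (h ▸ hx₀w')
      have hmw' : w ⊓ w' < w' := lt_of_le_of_ne inf_le_right
        (fun h => hw'.2 (lt_of_le_of_ne (h ▸ inf_le_left) (Ne.symm hne)) hw.lt)
      obtain ⟨a₀, ha₀, ha₀w'⟩ := exists_covby_le hmw'
      have hlab : lam (w ⊓ w') a₀ = lam w y := atom_label hcu hw hw' hne ha₀ ha₀w'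
      have hmeas : (Set.Iic a₀).ncard ≤ n := by
        have := measure_lt (lt_of_le_of_lt ha₀w' hw'.lt)
        omega
      obtain ⟨j, a, hjirr, haj, hja₀, hjm, ham, hlab2⟩ := ih hmeas ha₀
      refine ⟨j, a, hjirr, haj, hja₀.trans (ha₀w'.trans hw'.lt.le), ?_,
        ham.trans inf_le_left, by rw [hlab2, hlab]⟩
      intro hjw
      exact hjm (le_inf hjw (hja₀.trans ha₀w'))

lemma exists_jhat (hcu : IsCULabeling lam) {w y : L} (hw : w ⋖ y) :
    ∃ j a, SupIrred j ∧ a ⋖ j ∧ j ≤ y ∧ ¬ j ≤ w ∧ a ≤ w ∧ lam a j = lam w y :=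
  exists_jhat_aux hcu _ le_rfl hw

/-- Lemma A*: dual version, with meet-irreducibles. -/
lemma exists_mhat_aux (hcu : IsCULabeling lam) : ∀ n : ℕ, ∀ {x v : L},
    (Set.Ici x).ncard ≤ n → x ⋖ v →
    ∃ m b, InfIrred m ∧ m ⋖ b ∧ x ≤ m ∧ ¬ v ≤ m ∧ v ≤ b ∧ lam m b = lam x v := by
  intro n
  induction n with
  | zero =>
    intro x v hn hv
    have hpos : 0 < (Set.Ici x).ncard := (Set.ncard_pos (Set.toFinite _)).2 ⟨x, le_rfl⟩
    omega
  | succ n ih =>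
    intro x v hn hv
    by_cases hcase : ∀ t, x < t → v ≤ t
    · refine ⟨x, v, ⟨?_, ?_⟩, hv, le_rfl, hv.lt.not_ge, le_rfl, rfl⟩
      · intro hmax
        exact hv.lt.not_ge (hmax hv.lt.le)
      · intro b c hbc
        by_contra hcon
        push_neg at hcon
        have hb : x < b := lt_of_le_of_ne (hbc ▸ inf_le_left) (fun h => hcon.1 h.symm)
        have hc : x < c := lt_of_le_of_ne (hbc ▸ inf_le_right) (fun h => hcon.2 h.symm)
        exact hv.lt.not_ge (hbc ▸ le_inf (hcase b hb) (hcase c hc))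
    · push_neg at hcase
      obtain ⟨t₀, hxt₀, hvt₀⟩ := hcase
      obtain ⟨x', hx', hx't₀⟩ := exists_covby_le hxt₀
      have hne : v ≠ x' := fun h => hvt₀ (h ▸ hx't₀)
      have hQ : x' < v ⊔ x' := lt_of_le_of_ne le_sup_right
        (fun h => hvt₀ ((le_sup_left.trans h.ge).trans hx't₀))
      obtain ⟨c₀, hx'c₀, hc₀⟩ := exists_le_covby hQ
      have hlab : lam c₀ (v ⊔ x') = lam x v := coatom_label hcu hv hx' hne hc₀ hx'c₀
      have hmeas : (Set.Ici c₀).ncard ≤ n := by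
        have := measure_lt' (lt_of_lt_of_le hx'.lt hx'c₀)
        omega
      obtain ⟨m, b, hmirr, hmb, hc₀m, hQm, hQb, hlab2⟩ := ih hmeas hc₀
      refine ⟨m, b, hmirr, hmb, (hx'.lt.le.trans hx'c₀).trans hc₀m, ?_,
        le_sup_left.trans hQb, by rw [hlab2, hlab]⟩
      intro hvm
      exact hQm (sup_le hvm (hx'c₀.trans hc₀m))

lemma exists_mhat (hcu : IsCULabeling lam) {x v : L} (hv : x ⋖ v) :
    ∃ m b, InfIrred m ∧ m ⋖ b ∧ x ≤ m ∧ ¬ v ≤ m ∧ v ≤ b ∧ lam m b = lam x v :=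
  exists_mhat_aux hcu _ le_rfl hv

/-- CU1 as an equality criterion. -/
lemma jhat_unique (hcu : IsCULabeling lam) {j j' a a' : L} (hj : SupIrred j)
    (hj' : SupIrred j') (ha : a ⋖ j) (ha' : a' ⋖ j') (hl : lam a j = lam a' j') : j = j' := by
  by_contra hne
  exact hcu.2.1 j j' a a' hj hj' ha ha' hne hl

lemma mhat_unique (hcu : IsCULabeling lam) {m m' b b' : L} (hm : InfIrred m)
    (hm' : InfIrred m') (hb : m ⋖ b) (hb' : m' ⋖ b') (hl : lam m b = lam m' b') : m = m' := by
  by_contra hne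
  exact hcu.2.2 m m' b b' hm hm' hb hb' hne hl

end Kreweras2

namespace Kreweras3

open Kreweras Kreweras2

variable {L : Type u} [Lattice L] [Fintype L] {P : Type v} [PartialOrder P]
variable {lam : L → L → P}

/-- Dichotomy: for a cover `m ⋖ y` and a join-irreducible `j ≤ y` with `j ≰ m`,
`j_* ≤ m`, the label of the cover either equals the label of `j` or is strictly
smaller. -/
lemma dichotomy_j_aux (hcu : IsCULabeling lam) : ∀ n : ℕ, ∀ {m y j a : L},
    (Set.Iic y).ncard ≤ n → m ⋖ y → SupIrred j → a ⋖ j → j ≤ y → ¬ j ≤ m → a ≤ m →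
    lam m y = lam a j ∨ lam m y < lam a j := by
  intro n
  induction n with
  | zero =>
    intro m y j a hn _ _ _ _ _ _
    have hpos : 0 < (Set.Iic y).ncard := (Set.ncard_pos (Set.toFinite _)).2 ⟨y, le_rfl⟩
    omega
  | succ n ih =>
    intro m y j a hn hm hj ha hjy hjm ham
    rcases eq_or_lt_of_le hjy with heq | hjy'
    · -- j = y
      obtain ⟨j₁, a₁, hj₁, ha₁, hj₁y, hj₁m, _, hlab⟩ := exists_jhat hcu hm
      have hj₁j : j₁ = j := by
        rcases eq_or_lt_of_le hj₁y with h | h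
        · exact h.trans heq.symm
        · exact absurd ((lt_le_star hj ha (heq ▸ h)).trans ham) hj₁m
      have haa : a₁ = a := star_unique hj (hj₁j ▸ ha₁) ha
      left
      rw [← hlab, hj₁j, haa]
    · -- j < y
      obtain ⟨w, hjw, hw⟩ := exists_le_covby hjy'
      have hwm : w ≠ m := fun h => hjm (h ▸ hjw)
      obtain ⟨aa, haa, haaw, haalab, haamin⟩ := exists_min_atom hcu hm hw hwm.symm
      rw [inf_comm m w] at haa haalab haamin
      have hjq : ¬ j ≤ w ⊓ m := fun h => hjm (h.trans inf_le_right)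
      have haq : a ≤ w ⊓ m := le_inf (ha.lt.le.trans hjw) ham
      have hqz : w ⊓ m < (w ⊓ m) ⊔ j :=
        lt_of_le_of_ne le_sup_left (fun h => hjq (le_sup_right.trans h.ge))
      have hzw : (w ⊓ m) ⊔ j ≤ w := sup_le inf_le_left hjw
      have haaz : aa ≤ (w ⊓ m) ⊔ j := haamin _ hqz hzw
      by_cases hz : aa = (w ⊓ m) ⊔ j
      · have hmeas : (Set.Iic aa).ncard ≤ n := by
          have := measure_lt (lt_of_le_of_lt haaw hw.lt)
          omega
        rcases ih hmeas haa hj ha (hz ▸ le_sup_right) hjq haq with h | h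
        · left; rw [← haalab, h]
        · right; rw [← haalab]; exact h
      · have hjaa : ¬ j ≤ aa := fun h => hz (le_antisymm haaz (sup_le haa.lt.le h))
        obtain ⟨cc, hccS, hccmax⟩ := Set.Finite.exists_maximalFor id
          {c : L | aa ≤ c ∧ c ≤ (w ⊓ m) ⊔ j ∧ ¬ j ≤ c} (Set.toFinite _) ⟨aa, le_rfl, haaz, hjaa⟩
        obtain ⟨hcc1, hcc2, hcc3⟩ := hccS
        have hccz : cc ⋖ ((w ⊓ m) ⊔ j) := by
          have hlt : cc < (w ⊓ m) ⊔ j := lt_of_le_of_ne hcc2 (fun h => hcc3 (h ▸ le_sup_right))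
          obtain ⟨u, hccu, huz⟩ := exists_covby_le hlt
          have hju : j ≤ u := by
            by_contra hju
            exact hccu.lt.not_ge (hccmax ⟨hcc1.trans hccu.lt.le, huz, hju⟩ hccu.lt.le)
          have hequ : u = (w ⊓ m) ⊔ j :=
            le_antisymm huz (sup_le ((haa.lt.le.trans hcc1).trans hccu.lt.le) hju)
          exact hequ ▸ hccu
        have hmeasz : (Set.Iic ((w ⊓ m) ⊔ j)).ncard ≤ n := by
          have := measure_lt (lt_of_le_of_lt hzw hw.lt)
          omega
        have hIH := ih hmeasz hccz hj ha le_sup_right hcc3 (haq.trans (haa.lt.le.trans hcc1))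
        obtain ⟨C₁, hC₁, hsub₁⟩ := exists_maxChainIn {w ⊓ m, cc, (w ⊓ m) ⊔ j, w, y}
          (isChain_quint (haa.lt.le.trans hcc1) hccz.lt.le hzw hw.lt.le)
          (quint_subset_Icc le_rfl (haa.lt.le.trans hcc1) hccz.lt.le hzw hw.lt.le le_rfl)
        obtain ⟨C₂, hC₂, hsub₂⟩ := exists_maxChainIn {w ⊓ m, m, y, y, y}
          (isChain_quint inf_le_right hm.lt.le le_rfl le_rfl)
          (quint_subset_Icc le_rfl inf_le_right hm.lt.le le_rfl le_rfl le_rfl)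
        obtain ⟨_, _, cl3, _⟩ := hcu.1.2 w m y hwm hw hm C₁ C₂ hC₁ hC₂
          (hsub₁ (by simp)) (hsub₂ (by simp))
        have hint := cl3 cc ((w ⊓ m) ⊔ j)
          (consecIn_of_covby (hsub₁ (by simp)) (hsub₁ (by simp)) hccz)
          (lt_of_lt_of_le haa.lt hcc1) (lt_of_le_of_lt hzw hw.lt)
        rcases hIH with h | h
        · right; rw [← h]; exact hint.2
        · right; exact hint.2.trans h

lemma dichotomy_j (hcu : IsCULabeling lam) {m y j a : L} (hm : m ⋖ y) (hj : SupIrred j)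
    (ha : a ⋖ j) (hjy : j ≤ y) (hjm : ¬ j ≤ m) (ham : a ≤ m) :
    lam m y = lam a j ∨ lam m y < lam a j :=
  dichotomy_j_aux hcu _ le_rfl hm hj ha hjy hjm ham

/-- Dual dichotomy. -/
lemma dichotomy_m_aux (hcu : IsCULabeling lam) : ∀ n : ℕ, ∀ {x v M b : L},
    (Set.Ici x).ncard ≤ n → x ⋖ v → InfIrred M → M ⋖ b → x ≤ M → ¬ v ≤ M → v ≤ b →
    lam x v = lam M b ∨ lam x v < lam M b := by
  intro n
  induction n with
  | zero =>
    intro x v M b hn _ _ _ _ _ _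
    have hpos : 0 < (Set.Ici x).ncard := (Set.ncard_pos (Set.toFinite _)).2 ⟨x, le_rfl⟩
    omega
  | succ n ih =>
    intro x v M b hn hv hM hb hxM hvM hvb
    rcases eq_or_lt_of_le hxM with heq | hxM'
    · -- M = x
      obtain ⟨m₁, b₁, hm₁, hb₁, hxm₁, hvm₁, _, hlab⟩ := exists_mhat hcu hv
      have hm₁M : m₁ = M := by
        rcases eq_or_lt_of_le hxm₁ with h | h
        · exact heq ▸ h.symm
        · exact absurd (hvb.trans (gt_ge_costar hM hb (heq ▸ h))) hvm₁
      have hbb : b₁ = b := costar_unique hM (hm₁M ▸ hb₁) hb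
      left
      rw [← hlab, hm₁M, hbb]
    · -- x < M
      obtain ⟨x', hx', hx'M⟩ := exists_covby_le hxM'
      have hne : x' ≠ v := fun h => hvM (h ▸ hx'M)
      obtain ⟨cc, hcc, hx'cc, hcclab, hccmax⟩ := exists_max_coatom hcu hv hx' hne.symm
      rw [sup_comm v x'] at hcc hcclab hccmax
      have hQM : ¬ x' ⊔ v ≤ M := fun h => hvM (le_sup_right.trans h)
      have hQb : x' ⊔ v ≤ b := sup_le (hx'M.trans hb.lt.le) hvb
      have hZQ : (x' ⊔ v) ⊓ M < x' ⊔ v :=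
        lt_of_le_of_ne inf_le_left (fun h => hQM (h.ge.trans inf_le_right))
      have hZM : (x' ⊔ v) ⊓ M ≤ M := inf_le_right
      have hZcc : (x' ⊔ v) ⊓ M ≤ cc := hccmax _ hZQ (le_inf le_sup_left hx'M)
      by_cases hz : cc = (x' ⊔ v) ⊓ M
      · have hmeas : (Set.Ici cc).ncard ≤ n := by
          have := measure_lt' (lt_of_lt_of_le hx'.lt hx'cc)
          omega
        rcases ih hmeas hcc hM hb (hz ▸ inf_le_right) hQM hQb with h | h
        · left; rw [← hcclab, h]
        · right; rw [← hcclab]; exact h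
      · have hccM : ¬ cc ≤ M := fun h => hz (le_antisymm (le_inf hcc.lt.le h) hZcc)
        obtain ⟨CC, hCCS, hCCmin⟩ := Set.Finite.exists_minimalFor id
          {c : L | (x' ⊔ v) ⊓ M ≤ c ∧ c ≤ cc ∧ ¬ c ≤ M} (Set.toFinite _) ⟨cc, hZcc, le_rfl, hccM⟩
        obtain ⟨hCC1, hCC2, hCC3⟩ := hCCS
        have hCCz : ((x' ⊔ v) ⊓ M) ⋖ CC := by
          have hlt : (x' ⊔ v) ⊓ M < CC := lt_of_le_of_ne hCC1 (fun h => hCC3 (h ▸ inf_le_right))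
          obtain ⟨u, hZu, huCC⟩ := exists_le_covby hlt
          have hju : u ≤ M := by
            by_contra hju
            exact huCC.lt.not_ge (hCCmin ⟨hZu, huCC.lt.le.trans hCC2, hju⟩ huCC.lt.le)
          have hequ : u = (x' ⊔ v) ⊓ M :=
            le_antisymm (le_inf ((huCC.lt.le.trans hCC2).trans hcc.lt.le) hju) hZu
          exact hequ ▸ huCC
        have hmeasz : (Set.Ici ((x' ⊔ v) ⊓ M)).ncard ≤ n := by
          have := measure_lt' (lt_of_lt_of_le hx'.lt (le_inf (le_sup_left : x' ≤ x' ⊔ v) hx'M))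
          omega
        have hIH := ih hmeasz hCCz hM hb inf_le_right hCC3 ((hCC2.trans hcc.lt.le).trans hQb)
        obtain ⟨C₁, hC₁, hsub₁⟩ := exists_maxChainIn {x, x', (x' ⊔ v) ⊓ M, CC, cc}
          (isChain_quint hx'.lt.le (le_inf le_sup_left hx'M) hCCz.lt.le hCC2)
          (quint_subset_Icc le_rfl hx'.lt.le (le_inf le_sup_left hx'M) hCCz.lt.le hCC2
            hcc.lt.le)
        obtain ⟨C₂, hC₂, hsub₂⟩ := exists_maxChainIn {x, v, x' ⊔ v, x' ⊔ v, x' ⊔ v}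
          (isChain_quint hv.lt.le le_sup_right le_rfl le_rfl)
          (quint_subset_Icc le_rfl hv.lt.le le_sup_right le_rfl le_rfl le_rfl)
        obtain ⟨_, _, cl3, _⟩ := hcu.1.1 x' v x hne hx' hv C₁ C₂ hC₁ hC₂
          (hsub₁ (by simp)) (hsub₂ (by simp))
        have hint := cl3 ((x' ⊔ v) ⊓ M) CC
          (consecIn_of_covby (hsub₁ (by simp)) (hsub₁ (by simp)) hCCz)
          (lt_of_lt_of_le hx'.lt (le_inf le_sup_left hx'M))
          (lt_of_le_of_lt hCC2 (lt_of_le_of_ne hcc.lt.le hcc.lt.ne))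
        rcases hIH with h | h
        · right; rw [← h]; exact hint.2
        · right; exact hint.2.trans h

lemma dichotomy_m (hcu : IsCULabeling lam) {x v M b : L} (hv : x ⋖ v) (hM : InfIrred M)
    (hb : M ⋖ b) (hxM : x ≤ M) (hvM : ¬ v ≤ M) (hvb : v ≤ b) :
    lam x v = lam M b ∨ lam x v < lam M b :=
  dichotomy_m_aux hcu _ le_rfl hv hM hb hxM hvM hvb

/-- The kappa map: the unique maximal element above `j_*` not above `j`. -/
lemma kappa (hcu : IsCULabeling lam) {j a : L} (hj : SupIrred j) (ha : a ⋖ j) :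
    ∃ K, a ≤ K ∧ ¬ j ≤ K ∧ K ⋖ (K ⊔ j) ∧ lam K (K ⊔ j) = lam a j ∧
      ∀ t, a ≤ t → ¬ j ≤ t → t ≤ K := by
  classical
  have key : ∀ T, a ≤ T → ¬ j ≤ T →
      (∀ t, (a ≤ t ∧ ¬ j ≤ t) → T ≤ t → T = t) →
      InfIrred T ∧ T ⋖ (T ⊔ j) ∧ lam T (T ⊔ j) = lam a j := by
    intro T hT1 hT2 hmax
    have hTj : T < T ⊔ j := lt_of_le_of_ne le_sup_left
      (fun h => hT2 (le_sup_right.trans h.ge))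
    have hcov : T ⋖ T ⊔ j := by
      refine ⟨hTj, fun c hTc hcj => ?_⟩
      by_cases hjc : j ≤ c
      · exact hcj.not_ge (sup_le hTc.le hjc)
      · exact hTc.ne (hmax c ⟨hT1.trans hTc.le, hjc⟩ hTc.le)
    have hinf : InfIrred T := by
      refine ⟨fun hmax' => hTj.not_ge (hmax' hTj.le), fun b c hbc => ?_⟩
      by_contra hcon
      push_neg at hcon
      have hbT : T < b := lt_of_le_of_ne (hbc ▸ inf_le_left) (fun h => hcon.1 h.symm)
      have hcT : T < c := lt_of_le_of_ne (hbc ▸ inf_le_right) (fun h => hcon.2 h.symm)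
      have hjb : j ≤ b := by
        by_contra hjb
        exact hbT.ne (hmax b ⟨hT1.trans hbT.le, hjb⟩ hbT.le)
      have hjc : j ≤ c := by
        by_contra hjc
        exact hcT.ne (hmax c ⟨hT1.trans hcT.le, hjc⟩ hcT.le)
      exact hT2 (hbc ▸ le_inf hjb hjc)
    refine ⟨hinf, hcov, ?_⟩
    rcases dichotomy_j hcu hcov hj ha le_sup_right hT2 hT1 with h | h
    · exact h
    · rcases dichotomy_m hcu ha hinf hcov hT1 hT2 le_sup_right with h2 | h2
      · exact absurd h2 h.ne'
      · exact absurd (h2.trans h) (lt_irrefl _)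
  obtain ⟨K, hK, hKmax⟩ := Set.Finite.exists_maximalFor id
    {t : L | a ≤ t ∧ ¬ j ≤ t} (Set.toFinite _) ⟨a, le_rfl, fun h => ha.lt.not_ge h⟩
  obtain ⟨hKinf, hKcov, hKlab⟩ := key K hK.1 hK.2 (fun t ht hKt => le_antisymm hKt (hKmax ht hKt))
  refine ⟨K, hK.1, hK.2, hKcov, hKlab, fun t hat hjt => ?_⟩
  obtain ⟨T, hT, hTmax⟩ := Set.Finite.exists_maximalFor id
    {s : L | a ≤ s ∧ ¬ j ≤ s ∧ t ≤ s} (Set.toFinite _) ⟨t, hat, hjt, le_rfl⟩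
  have hTmax' : ∀ s, (a ≤ s ∧ ¬ j ≤ s) → T ≤ s → T = s := fun s hs hTs =>
    le_antisymm hTs (hTmax ⟨hs.1, hs.2, hT.2.2.trans hTs⟩ hTs)
  obtain ⟨hTinf, hTcov, hTlab⟩ := key T hT.1 hT.2.1 hTmax'
  have hTK : T = K := mhat_unique hcu hTinf hKinf hTcov hKcov (by rw [hTlab, hKlab])
  exact hTK ▸ hT.2.2

/-- Injectivity of `λ↓`. -/
lemma le_of_lamDown_subset (hcu : IsCULabeling lam) {y y' : L}
    (h : lamDown lam y ⊆ lamDown lam y') : y ≤ y' := by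
  by_contra hyy
  have hlt : y ⊓ y' < y := lt_of_le_of_ne inf_le_left (fun heq => hyy (heq ▸ inf_le_right))
  obtain ⟨w, hle, hw⟩ := exists_le_covby hlt
  obtain ⟨j, a, hj, ha, hjy, hjw, _, hlab⟩ := exists_jhat hcu hw
  have hmem : lam w y ∈ lamDown lam y := ⟨w, hw, rfl⟩
  obtain ⟨w'', hw'', hlab''⟩ := h hmem
  obtain ⟨j₂, a₂, hj₂, ha₂, hj₂y', _, _, hlab₂⟩ := exists_jhat hcu hw''
  have hjj : j₂ = j := jhat_unique hcu hj₂ hj ha₂ ha (by rw [hlab₂, hlab'', ← hlab])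
  exact hjw (le_inf hjy (hjj ▸ hj₂y') |>.trans hle)

lemma lamDown_inj (hcu : IsCULabeling lam) {y y' : L}
    (h : lamDown lam y = lamDown lam y') : y = y' :=
  le_antisymm (le_of_lamDown_subset hcu h.le) (le_of_lamDown_subset hcu h.ge)

/-- Injectivity of `λ↑`. -/
lemma ge_of_lamUp_subset (hcu : IsCULabeling lam) {y y' : L}
    (h : lamUp lam y ⊆ lamUp lam y') : y' ≤ y := by
  by_contra hyy
  have hlt : y < y ⊔ y' := lt_of_le_of_ne le_sup_left (fun heq => hyy (heq ▸ le_sup_right))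
  obtain ⟨v, hv, hle⟩ := exists_covby_le hlt
  obtain ⟨m, b, hm, hb, hym, hvm, _, hlab⟩ := exists_mhat hcu hv
  have hmem : lam y v ∈ lamUp lam y := ⟨v, hv, rfl⟩
  obtain ⟨v'', hv'', hlab''⟩ := h hmem
  obtain ⟨m₂, b₂, hm₂, hb₂, hy'm₂, _, _, hlab₂⟩ := exists_mhat hcu hv''
  have hmm : m₂ = m := mhat_unique hcu hm₂ hm hb₂ hb (by rw [hlab₂, hlab'', ← hlab])
  exact hvm (hle.trans (sup_le hym (hmm ▸ hy'm₂)))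

lemma lamUp_inj (hcu : IsCULabeling lam) {y y' : L}
    (h : lamUp lam y = lamUp lam y') : y = y' :=
  le_antisymm (ge_of_lamUp_subset hcu h.ge) (ge_of_lamUp_subset hcu h.le)

end Kreweras3

namespace Kreweras4

open Kreweras Kreweras2 Kreweras3

variable {L : Type u} [Lattice L] [Fintype L] {P : Type v} [PartialOrder P]
variable {lam : L → L → P}

lemma exists_kr (hcu : IsCULabeling lam) (x : L) :
    ∃ y, lamUp lam x = lamDown lam y := by
  classical
  letI : Inhabited L := ⟨x⟩
  letI : OrderBot L :=
    { bot := Finset.univ.inf' ⟨x, Finset.mem_univ x⟩ id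
      bot_le := fun c => Finset.inf'_le id (Finset.mem_univ c) }
  have hch : ∀ v : L, x ⋖ v → ∃ jj aa : L, SupIrred jj ∧ aa ⋖ jj ∧ jj ≤ v ∧ ¬ jj ≤ x ∧
      aa ≤ x ∧ lam aa jj = lam x v := fun v hv => exists_jhat hcu hv
  choose! j a hj ha hjv hjx hax hlab using hch
  have hkap : ∀ v : L, x ⋖ v → ∃ K, a v ≤ K ∧ ¬ j v ≤ K ∧ K ⋖ (K ⊔ j v) ∧
      lam K (K ⊔ j v) = lam (a v) (j v) ∧ ∀ t, a v ≤ t → ¬ j v ≤ t → t ≤ K :=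
    fun v hv => kappa hcu (hj v hv) (ha v hv)
  choose! K hK1 hK2 hK3 hK4 hK5 using hkap
  set V : Finset L := Finset.univ.filter (fun v => x ⋖ v) with hV
  set y : L := V.sup j with hy
  have hmemV : ∀ v, x ⋖ v → v ∈ V := fun v hv => by simp [hV, hv]
  have hjy : ∀ v, x ⋖ v → j v ≤ y := fun v hv => Finset.le_sup (hmemV v hv)
  have hxjv : ∀ v, x ⋖ v → x ⊔ j v = v := by
    intro v hv
    have h1 : x ⊔ j v ≤ v := sup_le hv.lt.le (hjv v hv)
    have h2 : x < x ⊔ j v := lt_of_le_of_ne le_sup_left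
      (fun h => hjx v hv (le_sup_right.trans h.ge))
    by_contra hne
    exact hv.2 h2 (lt_of_le_of_ne h1 hne)
  have hjK : ∀ v w, x ⋖ v → x ⋖ w → w ≠ v → j w ≤ K v := by
    intro v w hv hw hne
    have h2 : ¬ j v ≤ j w ⊔ a v := by
      intro hle
      have hvw : v ≤ w := by
        calc v = x ⊔ j v := (hxjv v hv).symm
          _ ≤ x ⊔ (j w ⊔ a v) := sup_le_sup_left hle _
          _ ≤ x ⊔ j w := sup_le le_sup_left
              (sup_le le_sup_right ((hax v hv).trans le_sup_left))
          _ = w := hxjv w hw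
      rcases eq_or_lt_of_le hvw with h | h
      · exact hne h.symm
      · exact hw.2 hv.lt h
    exact le_sup_left.trans (hK5 v hv (j w ⊔ a v) le_sup_right h2)
  have hW : ∀ v, x ⋖ v → (K v ⊓ y) ⋖ y ∧ lam (K v ⊓ y) y = lam x v ∧
      ∀ w', w' ⋖ y → ¬ j v ≤ w' → w' = K v ⊓ y := by
    intro v hv
    have hjvy : j v ≤ y := hjy v hv
    have havy : a v ≤ y := (ha v hv).lt.le.trans hjvy
    have havW : a v ≤ K v ⊓ y := le_inf (hK1 v hv) havy
    have hjvW : ¬ j v ≤ K v ⊓ y := fun h => hK2 v hv (h.trans inf_le_left)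
    have heq : (K v ⊓ y) ⊔ j v = y := by
      refine le_antisymm (sup_le inf_le_right hjvy) ?_
      rw [hy]
      refine Finset.sup_le fun u huV => ?_
      have hu : x ⋖ u := by simpa [hV] using huV
      by_cases huv : u = v
      · exact huv ▸ le_sup_right
      · exact le_trans (le_inf (hjK v u hv hu huv) (hjy u hu)) le_sup_left
    have hWlt : K v ⊓ y < y := lt_of_le_of_ne inf_le_right
      (fun h => hjvW (h.symm ▸ hjvy))
    have hWcov : (K v ⊓ y) ⋖ y := by
      refine ⟨hWlt, fun c hWc hcy => ?_⟩
      have hjvc : ¬ j v ≤ c := fun h => hcy.not_ge (heq ▸ sup_le hWc.le h)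
      have hcK : c ≤ K v := hK5 v hv c (havW.trans hWc.le) hjvc
      exact hWc.not_ge (le_inf hcK hcy.le)
    have hlabW : lam (K v ⊓ y) y = lam x v := by
      rcases dichotomy_j hcu hWcov (hj v hv) (ha v hv) hjvy hjvW havW with h | h
      · rw [h, hlab v hv]
      · exfalso
        obtain ⟨j', a', hj', ha', hj'y, hj'W, ha'W, hlab'⟩ := exists_jhat hcu hWcov
        have hj'Kj : j' ≤ K v ⊔ j v := hj'y.trans (heq ▸ sup_le_sup_right inf_le_left _)
        have hj'K : ¬ j' ≤ K v := fun hh => hj'W (le_inf hh hj'y)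
        rcases dichotomy_j hcu (hK3 v hv) hj' ha' hj'Kj hj'K
            (ha'W.trans inf_le_left) with h2 | h2
        · rw [hK4 v hv] at h2
          rw [h2, hlab'] at h
          exact lt_irrefl _ h
        · rw [hK4 v hv, hlab'] at h2
          exact lt_irrefl _ (h.trans h2)
    refine ⟨hWcov, hlabW, fun w' hw' hjvw' => ?_⟩
    by_contra hneW
    obtain ⟨aa, haa, haaw, haalab, _⟩ := exists_min_atom hcu hWcov hw'
      (fun h => hneW h.symm)
    obtain ⟨j₃, a₃, hj₃, ha₃, hj₃aa, _, _, hlab₃⟩ := exists_jhat hcu haa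
    have hj₃v : j₃ = j v := jhat_unique hcu hj₃ (hj v hv) ha₃ (ha v hv)
      (by rw [hlab₃, haalab, hlabW, ← hlab v hv])
    exact hjvw' (hj₃v ▸ (hj₃aa.trans haaw))
  refine ⟨y, ?_⟩
  ext p
  constructor
  · rintro ⟨v, hv, rfl⟩
    obtain ⟨hWcov, hWlab, _⟩ := hW v hv
    exact ⟨K v ⊓ y, hWcov, hWlab⟩
  · rintro ⟨w, hw, rfl⟩
    have hex : ∃ v ∈ V, ¬ j v ≤ w := by
      by_contra hall
      push_neg at hall
      exact hw.lt.not_ge (hy ▸ Finset.sup_le hall)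
    obtain ⟨v, hvV, hjvw⟩ := hex
    have hv : x ⋖ v := by simpa [hV] using hvV
    obtain ⟨hWcov, hWlab, hWuniq⟩ := hW v hv
    have hwW : w = K v ⊓ y := hWuniq w hw hjvw
    exact ⟨v, hv, by rw [hwW, hWlab]⟩

end Kreweras4

/-- The Kreweras map, sending `x` to the unique `y` with
`λ↑(x) = λ↓(y)`, is a well-defined bijection of the lattice onto itself. -/
theorem kreweras_map_bijective
    {L : Type u} [Lattice L] [Fintype L] {P : Type v} [PartialOrder P]
    (lam : L → L → P) (hlam : IsCULabeling lam) :
    ∃ Kr : L → L,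
      (∀ x : L, lamUp lam x = lamDown lam (Kr x) ∧
        ∀ y : L, lamUp lam x = lamDown lam y → y = Kr x) ∧
      Function.Bijective Kr := by
  classical
  rcases isEmpty_or_nonempty L with hL | hL
  · exact ⟨id, fun x => isEmptyElim x, Function.bijective_id⟩
  · obtain ⟨Kr, hKr⟩ := Classical.axiomOfChoice (Kreweras4.exists_kr hlam)
    refine ⟨Kr, fun x => ⟨hKr x, fun y hy => Kreweras3.lamDown_inj hlam
      (by rw [← hy]; exact hKr x)⟩, ?_⟩
    rw [← Finite.injective_iff_bijective]
    intro x x' h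
    apply Kreweras3.lamUp_inj hlam
    rw [hKr x, hKr x', h]
end
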